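/- arXiv:1204.3869 — 5 statements merged into one kernel-verified Lean document; each statement's English description precedes it below -/
import Mathlib

section
/- Let 𝔅' ⊆ 𝔅(X) be nonempty with the forward exchange property, and for B ∈ 𝔅(X) let R_B ∈ 𝒟(X) be the unique polynomial with ⟨Q_D, R_B⟩ = δ_{D,B} for all D ∈ 𝔅(X). Then for every B ∈ 𝔅' the polynomial R_B lies in 𝒟(X,𝔅'), and {R_B : B ∈ 𝔅'} is a basis of 𝒟(X,𝔅') dual to the basis {Q_B : B ∈ 𝔅'} of 𝒫(X,𝔅'). -/
noncomputable section

variable {r N : ℕ}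

/-- `p_u`, the degree-one polynomial associated with the vector `u ∈ ℝ^r`. -/
def linPoly {r : ℕ} (u : Fin r → ℝ) : MvPolynomial (Fin r) ℝ :=
  ∑ i, MvPolynomial.C (u i) * MvPolynomial.X i

/-- `p_Y = ∏_{i ∈ Y} p_{X i}` for a sublist `Y` of the list `X`. -/
def prodPoly {r N : ℕ} (X : Fin N → Fin r → ℝ) (Y : Finset (Fin N)) : MvPolynomial (Fin r) ℝ :=
  ∏ i ∈ Y, linPoly (X i)

/-- The pairing `⟨p, f⟩ = (p(∂/∂t₁,…,∂/∂t_r) f)(0)`, written via coefficients: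
`⟨p,f⟩ = ∑_α α! · p_α · f_α`. -/
def pairing {r : ℕ} (p f : MvPolynomial (Fin r) ℝ) : ℝ :=
  ∑ α ∈ p.support, (∏ i, ((α i).factorial : ℝ)) * p.coeff α * f.coeff α

lemma pairing_zero {r : ℕ} (q : MvPolynomial (Fin r) ℝ) : pairing q 0 = 0 := by
  simp [pairing]

lemma pairing_add {r : ℕ} (q f g : MvPolynomial (Fin r) ℝ) :
    pairing q (f + g) = pairing q f + pairing q g := by
  unfold pairing
  rw [← Finset.sum_add_distrib]
  exact Finset.sum_congr rfl fun α _ => by rw [MvPolynomial.coeff_add]; ring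

lemma pairing_smul {r : ℕ} (q : MvPolynomial (Fin r) ℝ) (c : ℝ) (f : MvPolynomial (Fin r) ℝ) :
    pairing q (c • f) = c * pairing q f := by
  unfold pairing
  rw [Finset.mul_sum]
  exact Finset.sum_congr rfl fun α _ => by rw [MvPolynomial.coeff_smul, smul_eq_mul]; ring

/-- The kernel (Macaulay inverse system) of an ideal `I`:
all polynomials annihilated (in the sense of the pairing) by every element of `I`. -/
def kerIdeal {r : ℕ} (I : Ideal (MvPolynomial (Fin r) ℝ)) :
    Submodule ℝ (MvPolynomial (Fin r) ℝ) where
  carrier := {f | ∀ q ∈ I, pairing q f = 0}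
  add_mem' := fun hf hg q hq => by
    rw [pairing_add, hf q hq, hg q hq, add_zero]
  zero_mem' := fun q _ => pairing_zero q
  smul_mem' := fun c f hf q hq => by
    rw [pairing_smul, hf q hq, mul_zero]

section Lists

variable {M : Type*} [AddCommGroup M] [Module ℝ M]

/-- `B ⊆ G` is (the index set of) a sublist of the list `v` restricted to the ground set `G`
that is a basis of the ambient space. -/
def basesOn (v : Fin N → M) (G : Finset (Fin N)) : Set (Finset (Fin N)) :=
  {B | B ⊆ G ∧ LinearIndependent ℝ ((B : Set (Fin N)).restrict v) ∧
    Submodule.span ℝ (v '' (B : Set (Fin N))) = ⊤}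

/-- `j` is externally active with respect to the basis `B`:
`v j ∈ span {v e : e ∈ B, e ≤ j}` and `j ∉ B`. -/
def isExtActive (v : Fin N → M) (B : Finset (Fin N)) (j : Fin N) : Prop :=
  j ∉ B ∧ v j ∈ Submodule.span ℝ (v '' {e : Fin N | e ∈ B ∧ e ≤ j})

open Classical in
/-- The set `E(B)` of externally active elements (within the ground set `G`). -/
def extSetOn (v : Fin N → M) (G B : Finset (Fin N)) : Finset (Fin N) :=
  G.filter (fun j => isExtActive v B j)

/-- `C` is a cocircuit w.r.t. the collection of bases `𝔅`: an inclusion-minimal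
sublist of the ground set `G` intersecting every basis in `𝔅`. -/
def isCocircuitOn (G : Finset (Fin N)) (𝔅 : Set (Finset (Fin N))) (C : Finset (Fin N)) : Prop :=
  C ⊆ G ∧ (∀ B ∈ 𝔅, (C ∩ B).Nonempty) ∧
    ∀ C' ⊆ C, (∀ B ∈ 𝔅, (C' ∩ B).Nonempty) → C' = C

/-- A set of bases `𝔅` of the list `v` has the forward exchange property. -/
def forwardExchange (v : Fin N → M) (𝔅 : Set (Finset (Fin N))) : Prop :=
  ∀ B ∈ 𝔅, ∀ b ∈ B, ∀ j : Fin N,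
    v j ∈ Submodule.span ℝ (v '' {e : Fin N | e ∈ B ∧ e ≤ b}) →
    v j ∉ Submodule.span ℝ (v '' {e : Fin N | e ∈ B ∧ e < b}) →
    ¬ isExtActive v B j →
    insert j (B.erase b) ∈ 𝔅

end Lists

/-- The ideal `𝒥` generated by the cocircuit polynomials `p_C`. -/
def Jideal (X : Fin N → Fin r → ℝ) (G : Finset (Fin N)) (𝔅 : Set (Finset (Fin N))) :
    Ideal (MvPolynomial (Fin r) ℝ) :=
  Ideal.span {p | ∃ C : Finset (Fin N), isCocircuitOn G 𝔅 C ∧ p = prodPoly X C}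

/-- The generalised `𝒟`-space: the kernel of the cocircuit ideal. -/
def Dspace (X : Fin N → Fin r → ℝ) (G : Finset (Fin N)) (𝔅 : Set (Finset (Fin N))) :
    Submodule ℝ (MvPolynomial (Fin r) ℝ) :=
  kerIdeal (Jideal X G 𝔅)

/-- `Q_B := p_{X∖(B ∪ E(B))}` (within the ground set `G`). -/
def QB (X : Fin N → Fin r → ℝ) (G B : Finset (Fin N)) : MvPolynomial (Fin r) ℝ :=
  prodPoly X (G \ (B ∪ extSetOn X G B))

/-- The central `𝒫`-space: the span of `p_Y` over sublists `Y` of `G` whose complement spans. -/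
def PspaceOn (X : Fin N → Fin r → ℝ) (G : Finset (Fin N)) :
    Submodule ℝ (MvPolynomial (Fin r) ℝ) :=
  Submodule.span ℝ {p | ∃ Y : Finset (Fin N), Y ⊆ G ∧
    Submodule.span ℝ (X '' ((G \ Y : Finset (Fin N)) : Set (Fin N))) = ⊤ ∧ p = prodPoly X Y}

/-- The generalised `𝒫`-space `𝒫(X,𝔅') = span {Q_B : B ∈ 𝔅'}`. -/
def PspaceB (X : Fin N → Fin r → ℝ) (G : Finset (Fin N)) (𝔅 : Set (Finset (Fin N))) :
    Submodule ℝ (MvPolynomial (Fin r) ℝ) :=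
  Submodule.span ℝ {p | ∃ B ∈ 𝔅, p = QB X G B}

/-- The directional derivative `D_u = ∑ i, uᵢ ∂/∂tᵢ` as a linear map. -/
def dirDeriv {r : ℕ} (u : Fin r → ℝ) :
    MvPolynomial (Fin r) ℝ →ₗ[ℝ] MvPolynomial (Fin r) ℝ :=
  ∑ i, u i • (MvPolynomial.pderiv i).toLinearMap

end

noncomputable section Dev

open MvPolynomial Finset Submodule

namespace Stmt11

variable {r N : ℕ}

/-! ### Pairing lemmas -/

lemma pairing_sum_superset {q f : MvPolynomial (Fin r) ℝ} {s : Finset (Fin r →₀ ℕ)}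
    (h : q.support ⊆ s) :
    pairing q f = ∑ α ∈ s, (∏ i, ((α i).factorial : ℝ)) * q.coeff α * f.coeff α := by
  unfold pairing
  refine Finset.sum_subset h (fun α _ hα => ?_)
  rw [MvPolynomial.notMem_support_iff.mp hα]
  ring

lemma pairing_add_left (q p f : MvPolynomial (Fin r) ℝ) :
    pairing (q + p) f = pairing q f + pairing p f := by
  rw [pairing_sum_superset (f := f) (s := q.support ∪ p.support)
      (MvPolynomial.support_add),
    pairing_sum_superset (f := f) (s := q.support ∪ p.support)
      (Finset.subset_union_left),
    pairing_sum_superset (f := f) (s := q.support ∪ p.support)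
      (Finset.subset_union_right), ← Finset.sum_add_distrib]
  refine Finset.sum_congr rfl fun α _ => ?_
  rw [MvPolynomial.coeff_add]; ring

lemma pairing_smul_left (c : ℝ) (q f : MvPolynomial (Fin r) ℝ) :
    pairing (c • q) f = c * pairing q f := by
  rcases eq_or_ne c 0 with rfl | hc
  · simp [pairing]
  · rw [pairing_sum_superset (f := f) (s := q.support)
      (by rw [MvPolynomial.support_smul_eq hc]),
      pairing, Finset.mul_sum]
    refine Finset.sum_congr rfl fun α _ => ?_
    rw [MvPolynomial.coeff_smul]
    simp only [smul_eq_mul]; ring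

lemma pairing_zero_left (f : MvPolynomial (Fin r) ℝ) : pairing 0 f = 0 := by
  simp [pairing]

lemma pairing_monomial (α : Fin r →₀ ℕ) (c : ℝ) (f : MvPolynomial (Fin r) ℝ) :
    pairing (MvPolynomial.monomial α c) f = (∏ i, ((α i).factorial : ℝ)) * c * f.coeff α := by
  rw [pairing_sum_superset (f := f) (s := {α}) MvPolynomial.support_monomial_subset,
    Finset.sum_singleton, MvPolynomial.coeff_monomial, if_pos rfl]

lemma eq_zero_of_pairing_monomial (g : MvPolynomial (Fin r) ℝ)
    (h : ∀ α : Fin r →₀ ℕ, pairing (MvPolynomial.monomial α 1) g = 0) : g = 0 := by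
  ext α
  have := h α
  rw [pairing_monomial] at this
  have hfac : (0:ℝ) < ∏ i, ((α i).factorial : ℝ) := by
    apply Finset.prod_pos
    intro i _
    exact_mod_cast Nat.factorial_pos (α i)
  have : (∏ i, ((α i).factorial : ℝ)) * g.coeff α = 0 := by linarith [this]
  simpa [MvPolynomial.coeff_zero] using (mul_eq_zero.mp this).resolve_left (ne_of_gt hfac)

lemma pairing_sub (q f g : MvPolynomial (Fin r) ℝ) :
    pairing q (f - g) = pairing q f - pairing q g := by
  unfold pairing
  rw [← Finset.sum_sub_distrib]
  refine Finset.sum_congr rfl fun α _ => ?_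
  rw [MvPolynomial.coeff_sub]; ring

lemma pairing_sum {ι : Type*} (q : MvPolynomial (Fin r) ℝ) (s : Finset ι)
    (f : ι → MvPolynomial (Fin r) ℝ) :
    pairing q (∑ i ∈ s, f i) = ∑ i ∈ s, pairing q (f i) := by
  classical
  induction s using Finset.induction_on with
  | empty => simp [pairing_zero]
  | insert _ _ h ih => rw [Finset.sum_insert h, pairing_add, ih, Finset.sum_insert h]

/-! ### linPoly and prodPoly lemmas -/

lemma linPoly_add (u v : Fin r → ℝ) : linPoly (u + v) = linPoly u + linPoly v := by
  unfold linPoly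
  rw [← Finset.sum_add_distrib]
  refine Finset.sum_congr rfl fun i _ => ?_
  rw [Pi.add_apply, MvPolynomial.C_add]; ring

lemma linPoly_smul (c : ℝ) (u : Fin r → ℝ) : linPoly (c • u) = c • linPoly u := by
  unfold linPoly
  rw [Finset.smul_sum]
  refine Finset.sum_congr rfl fun i _ => ?_
  rw [Pi.smul_apply, smul_eq_mul, MvPolynomial.C_mul, MvPolynomial.smul_eq_C_mul]
  ring

/-- `linPoly` as a linear map. -/
def linPolyL : (Fin r → ℝ) →ₗ[ℝ] MvPolynomial (Fin r) ℝ where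
  toFun := linPoly
  map_add' := linPoly_add
  map_smul' := linPoly_smul

lemma linPoly_single (i : Fin r) : linPoly (Pi.single i (1:ℝ)) = MvPolynomial.X i := by
  unfold linPoly
  rw [Finset.sum_eq_single i]
  · simp
  · intro j _ hj
    rw [Pi.single_eq_of_ne hj]; simp
  · intro h; exact absurd (Finset.mem_univ i) h

lemma prodPoly_insert (X : Fin N → Fin r → ℝ) {Z : Finset (Fin N)} {a : Fin N} (ha : a ∉ Z) :
    prodPoly X (insert a Z) = linPoly (X a) * prodPoly X Z :=
  Finset.prod_insert ha

lemma prodPoly_erase (X : Fin N → Fin r → ℝ) {Z : Finset (Fin N)} {w : Fin N} (hw : w ∈ Z) :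
    prodPoly X Z = linPoly (X w) * prodPoly X (Z.erase w) :=
  (Finset.mul_prod_erase Z _ hw).symm

lemma prodPoly_union (X : Fin N → Fin r → ℝ) {A B : Finset (Fin N)} (h : Disjoint A B) :
    prodPoly X (A ∪ B) = prodPoly X A * prodPoly X B :=
  Finset.prod_union h

/-- representation of a vector in the span of finitely many of the `X a`. -/
lemma exists_rep (X : Fin N → Fin r → ℝ) {T : Finset (Fin N)} {x : Fin r → ℝ}
    (hx : x ∈ Submodule.span ℝ (X '' (T : Set (Fin N)))) :
    ∃ c : Fin N → ℝ, x = ∑ a ∈ T, c a • X a := by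
  classical
  have himg : X '' (T : Set (Fin N)) = Set.range (fun a : {y // y ∈ T} => X a) := by
    ext y; constructor
    · rintro ⟨a, ha, rfl⟩; exact ⟨⟨a, ha⟩, rfl⟩
    · rintro ⟨⟨a, ha⟩, rfl⟩; exact ⟨a, ha, rfl⟩
  rw [himg] at hx
  obtain ⟨c, hc⟩ := (mem_span_range_iff_exists_fun ℝ).mp hx
  refine ⟨fun a => if ha : a ∈ T then c ⟨a, ha⟩ else 0, ?_⟩
  rw [← hc, ← Finset.sum_attach T (fun a => (if ha : a ∈ T then c ⟨a, ha⟩ else 0) • X a)]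
  refine Finset.sum_congr rfl fun a _ => ?_
  rw [dif_pos a.2]

end Stmt11
end Dev
noncomputable section Dev2
open MvPolynomial Finset Submodule
namespace Stmt11
variable {r N : ℕ}

/-- A finite family in which each vector is outside the span of the earlier ones is
linearly independent. -/
lemma indep_of_ordered (X : Fin N → Fin r → ℝ) {B : Finset (Fin N)}
    (h : ∀ b ∈ B, X b ∉ Submodule.span ℝ (X '' {a | a ∈ B ∧ a < b})) :
    LinearIndependent ℝ ((B : Set (Fin N)).restrict X) := by
  rw [linearIndependent_iff']
  intro s g hsum
  by_contra hne
  push_neg at hne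
  obtain ⟨i₀, hi₀s, hi₀⟩ := hne
  classical
  set s' := s.filter (fun i => g i ≠ 0) with hs'
  have hne' : s'.Nonempty := ⟨i₀, by simp [hs', hi₀s, hi₀]⟩
  obtain ⟨m, hms', hmax⟩ := Finset.exists_max_image s' (fun i => (i : Fin N)) hne'
  have hgm : g m ≠ 0 := (Finset.mem_filter.mp hms').2
  have hsum' : ∑ i ∈ s', g i • X (i : Fin N) = 0 := by
    rw [← hsum]
    apply Finset.sum_subset (Finset.filter_subset _ _)
    intro i his hns
    have hgi : g i = 0 := by
      by_contra hgi
      exact hns (Finset.mem_filter.mpr ⟨his, hgi⟩)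
    simp [hgi]
  have h1 : g m • X (m : Fin N) + ∑ i ∈ s'.erase m, g i • X (i : Fin N) = 0 := by
    rw [Finset.add_sum_erase _ (fun i => g i • X (i : Fin N)) hms']
    exact hsum'
  have h2 : g m • X (m : Fin N) = - ∑ i ∈ s'.erase m, g i • X (i : Fin N) :=
    eq_neg_of_add_eq_zero_left h1
  have hXm : X (m : Fin N) = ∑ i ∈ s'.erase m, (-(g m)⁻¹ * g i) • X (i : Fin N) := by
    have h3 : X (m : Fin N) = (g m)⁻¹ • (g m • X (m : Fin N)) := by
      rw [smul_smul, inv_mul_cancel₀ hgm, one_smul]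
    rw [h3, h2, smul_neg, Finset.smul_sum, ← Finset.sum_neg_distrib]
    refine Finset.sum_congr rfl fun i _ => ?_
    rw [smul_smul, ← neg_smul, neg_mul]
  have hmem : X (m : Fin N) ∈ Submodule.span ℝ (X '' {a | a ∈ B ∧ a < (m : Fin N)}) := by
    rw [hXm]
    refine Submodule.sum_mem _ fun i hi => Submodule.smul_mem _ _ (Submodule.subset_span ?_)
    have hile : (i : Fin N) ≤ (m : Fin N) := hmax i (Finset.mem_of_mem_erase hi)
    have hine : i ≠ m := Finset.ne_of_mem_erase hi
    have hlt : (i : Fin N) < (m : Fin N) :=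
      lt_of_le_of_ne hile (fun hc => hine (Subtype.coe_injective hc))
    exact ⟨(i : Fin N), ⟨i.2, hlt⟩, rfl⟩
  exact h (m : Fin N) m.2 hmem

variable (X : Fin N → Fin r → ℝ)

open scoped Classical in
/-- The greedy "basis" of a sublist `S`. -/
def gr (S : Finset (Fin N)) : Finset (Fin N) :=
  S.filter (fun i => X i ∉ Submodule.span ℝ (X '' {a | a ∈ S ∧ a < i}))

open scoped Classical in
lemma gr_subset (S : Finset (Fin N)) : gr X S ⊆ S := Finset.filter_subset _ _

lemma gr_span_lt (S : Finset (Fin N)) : ∀ i : Fin N,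
    Submodule.span ℝ (X '' {a | a ∈ gr X S ∧ a < i}) =
      Submodule.span ℝ (X '' {a | a ∈ S ∧ a < i}) := by
  classical
  suffices H : ∀ n : ℕ, ∀ i : Fin N, (i : ℕ) = n →
      Submodule.span ℝ (X '' {a | a ∈ gr X S ∧ a < i}) =
        Submodule.span ℝ (X '' {a | a ∈ S ∧ a < i}) by
    exact fun i => H i.1 i rfl
  intro n
  induction n using Nat.strong_induction_on with
  | _ n ih =>
    intro i hi
    apply le_antisymm
    · refine Submodule.span_mono (Set.image_mono ?_)
      rintro a ⟨h1, h2⟩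
      exact ⟨gr_subset X S h1, h2⟩
    · rw [Submodule.span_le]
      rintro - ⟨a, ⟨haS, hai⟩, rfl⟩
      by_cases hag : a ∈ gr X S
      · exact Submodule.subset_span ⟨a, ⟨hag, hai⟩, rfl⟩
      · have hXa : X a ∈ Submodule.span ℝ (X '' {c | c ∈ S ∧ c < a}) := by
          have hh := Finset.mem_filter.not.mp hag
          push_neg at hh
          exact hh haS
        have hlt : (a : ℕ) < n := by rw [← hi]; exact hai
        rw [← ih a.1 hlt a rfl] at hXa
        refine Submodule.span_mono (Set.image_mono ?_) hXa
        rintro c ⟨h1, h2⟩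
        exact ⟨h1, lt_trans h2 hai⟩

open scoped Classical in
lemma gr_reduce {S : Finset (Fin N)} {s : Fin N} (hs : s ∈ S) (hsg : s ∉ gr X S) :
    X s ∈ Submodule.span ℝ (X '' {a | a ∈ gr X S ∧ a < s}) := by
  rw [gr_span_lt]
  have hh := Finset.mem_filter.not.mp hsg
  push_neg at hh
  exact hh hs

lemma gr_spans (S : Finset (Fin N)) :
    Submodule.span ℝ (X '' (gr X S : Set (Fin N))) = Submodule.span ℝ (X '' (S : Set (Fin N))) := by
  apply le_antisymm
  · exact Submodule.span_mono (Set.image_mono (gr_subset X S))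
  · rw [Submodule.span_le]
    rintro - ⟨s, hsS, rfl⟩
    by_cases hsg : s ∈ gr X S
    · exact Submodule.subset_span ⟨s, hsg, rfl⟩
    · refine Submodule.span_mono (Set.image_mono ?_) (gr_reduce X hsS hsg)
      rintro a ⟨h1, h2⟩
      exact h1

lemma gr_indep (S : Finset (Fin N)) :
    LinearIndependent ℝ ((gr X S : Set (Fin N)).restrict X) := by
  classical
  apply indep_of_ordered
  intro b hb
  rw [gr_span_lt]
  exact (Finset.mem_filter.mp hb).2

lemma gr_basesOn {S : Finset (Fin N)}
    (hS : Submodule.span ℝ (X '' (S : Set (Fin N))) = ⊤) :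
    gr X S ∈ basesOn X Finset.univ :=
  ⟨Finset.subset_univ _, gr_indep X S, by rw [gr_spans, hS]⟩

/-- Existence of the "level" of a nonzero vector with respect to a spanning sublist. -/
lemma exists_level {B : Finset (Fin N)}
    (hspan : Submodule.span ℝ (X '' (B : Set (Fin N))) = ⊤)
    {x : Fin r → ℝ} (hx0 : x ≠ 0) :
    ∃ b ∈ B, x ∈ Submodule.span ℝ (X '' {e | e ∈ B ∧ e ≤ b}) ∧
      x ∉ Submodule.span ℝ (X '' {e | e ∈ B ∧ e < b}) := by
  classical
  have hBne : B.Nonempty := by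
    rcases Finset.eq_empty_or_nonempty B with rfl | h
    · exfalso
      apply hx0
      have : x ∈ Submodule.span ℝ (X '' ((∅ : Finset (Fin N)) : Set (Fin N))) := by
        rw [hspan]; trivial
      simpa using this
    · exact h
  set T := B.filter (fun b => x ∈ Submodule.span ℝ (X '' {e | e ∈ B ∧ e ≤ b})) with hT
  have hTne : T.Nonempty := by
    refine ⟨B.max' hBne, Finset.mem_filter.mpr ⟨B.max'_mem hBne, ?_⟩⟩
    have : (B : Set (Fin N)) = {e | e ∈ B ∧ e ≤ B.max' hBne} := by
      ext e; exact ⟨fun he => ⟨he, B.le_max' e he⟩, fun he => he.1⟩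
    rw [← this, hspan]; trivial
  set b := T.min' hTne with hb
  have hbT : b ∈ T := T.min'_mem hTne
  refine ⟨b, (Finset.mem_filter.mp hbT).1, (Finset.mem_filter.mp hbT).2, ?_⟩
  intro hxlt
  have hFdef : ∀ F : Finset (Fin N), F = B.filter (fun e => e < b) → False := by
    intro F hF
    rcases Finset.eq_empty_or_nonempty F with hFe | hFne
    · have hset : {e | e ∈ B ∧ e < b} = (∅ : Set (Fin N)) := by
        ext e
        simp only [Set.mem_setOf_eq, Set.mem_empty_iff_false, iff_false, not_and]
        intro heB helt
        have heF : e ∈ F := by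
          rw [hF]; exact Finset.mem_filter.mpr ⟨heB, helt⟩
        rw [hFe] at heF
        exact Finset.notMem_empty e heF
      rw [hset] at hxlt
      simp only [Set.image_empty, Submodule.span_empty, Submodule.mem_bot] at hxlt
      exact hx0 hxlt
    · obtain ⟨m, hmF, hmax⟩ := Finset.exists_max_image F id hFne
      have hmB : m ∈ B := by
        rw [hF] at hmF; exact (Finset.mem_filter.mp hmF).1
      have hmb : m < b := by
        rw [hF] at hmF; exact (Finset.mem_filter.mp hmF).2
      have hset : {e | e ∈ B ∧ e < b} = {e | e ∈ B ∧ e ≤ m} := by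
        ext e
        constructor
        · rintro ⟨heB, helt⟩
          refine ⟨heB, hmax e ?_⟩
          rw [hF]; exact Finset.mem_filter.mpr ⟨heB, helt⟩
        · rintro ⟨heB, hele⟩
          exact ⟨heB, lt_of_le_of_lt hele hmb⟩
      rw [hset] at hxlt
      have hmT : m ∈ T := Finset.mem_filter.mpr ⟨hmB, hxlt⟩
      have hble : b ≤ m := T.min'_le m hmT
      exact absurd (lt_of_le_of_lt hble hmb) (lt_irrefl b)
  exact hFdef _ rfl

/-- An element of an independent family is not in the span of the others. -/
lemma not_mem_span_of_indep {B : Finset (Fin N)}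
    (hind : LinearIndependent ℝ ((B : Set (Fin N)).restrict X)) {b : Fin N} (hb : b ∈ B)
    {S : Set (Fin N)} (hS : S ⊆ (B : Set (Fin N))) (hbS : b ∉ S) :
    X b ∉ Submodule.span ℝ (X '' S) := by
  have himg : ((B : Set (Fin N)).restrict X) '' {e : (B : Set (Fin N)) | (e : Fin N) ∈ S} =
      X '' S := by
    ext y
    constructor
    · rintro ⟨⟨e, heB⟩, heS, rfl⟩; exact ⟨e, heS, rfl⟩
    · rintro ⟨e, heS, rfl⟩; exact ⟨⟨e, hS heS⟩, heS, rfl⟩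
  rw [← himg]
  exact hind.notMem_span_image (x := ⟨b, hb⟩) hbS

end Stmt11
end Dev2
noncomputable section Dev3
open MvPolynomial Finset Submodule
namespace Stmt11
variable {r N : ℕ} (X : Fin N → Fin r → ℝ)

lemma exists_cocircuit_subset (𝔅 : Set (Finset (Fin N))) {C₀ : Finset (Fin N)}
    (hhit : ∀ B ∈ 𝔅, (C₀ ∩ B).Nonempty) :
    ∃ C, C ⊆ C₀ ∧ isCocircuitOn Finset.univ 𝔅 C := by
  classical
  set S := C₀.powerset.filter (fun C => ∀ B ∈ 𝔅, (C ∩ B).Nonempty) with hSdef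
  have hSne : S.Nonempty :=
    ⟨C₀, Finset.mem_filter.mpr ⟨Finset.mem_powerset_self C₀, hhit⟩⟩
  obtain ⟨C, hCS, hmin⟩ := Finset.exists_min_image S Finset.card hSne
  have hCsub : C ⊆ C₀ := Finset.mem_powerset.mp (Finset.mem_filter.mp hCS).1
  have hChit : ∀ B ∈ 𝔅, (C ∩ B).Nonempty := (Finset.mem_filter.mp hCS).2
  refine ⟨C, hCsub, Finset.subset_univ _, hChit, ?_⟩
  intro C' hC'sub hC'hit
  have hC'S : C' ∈ S := Finset.mem_filter.mpr
    ⟨Finset.mem_powerset.mpr (hC'sub.trans hCsub), hC'hit⟩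
  exact Finset.eq_of_subset_of_card_le hC'sub (hmin C' hC'S)

lemma prodPoly_factor {Z C : Finset (Fin N)} (h : C ⊆ Z) :
    prodPoly X Z = prodPoly X C * prodPoly X (Z \ C) := by
  classical
  rw [← prodPoly_union X (Finset.disjoint_sdiff), Finset.union_sdiff_of_subset h]

lemma prod_mem_Jideal_of_subset_cocircuit {𝔅 : Set (Finset (Fin N))} {Z : Finset (Fin N)}
    (hhit : ∀ B ∈ 𝔅, (Z ∩ B).Nonempty) :
    prodPoly X Z ∈ Jideal X Finset.univ 𝔅 := by
  obtain ⟨C, hCsub, hcoc⟩ := exists_cocircuit_subset 𝔅 hhit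
  rw [prodPoly_factor X hCsub]
  exact Ideal.mul_mem_right _ _ (Ideal.subset_span ⟨C, hcoc, rfl⟩)

lemma prod_mem_Jideal_of_not_spanning {Z : Finset (Fin N)}
    (hns : ¬ (Submodule.span ℝ (X '' ((Zᶜ : Finset (Fin N)) : Set (Fin N))) = ⊤)) :
    prodPoly X Z ∈ Jideal X Finset.univ (basesOn X Finset.univ) := by
  classical
  set C₀ := Finset.univ.filter
    (fun i => X i ∉ Submodule.span ℝ (X '' ((Zᶜ : Finset (Fin N)) : Set (Fin N)))) with hC₀
  have hC₀Z : C₀ ⊆ Z := by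
    intro i hi
    by_contra hiZ
    exact (Finset.mem_filter.mp hi).2
      (Submodule.subset_span ⟨i, Finset.mem_coe.mpr (Finset.mem_compl.mpr hiZ), rfl⟩)
  have hhit : ∀ D ∈ basesOn X Finset.univ, (C₀ ∩ D).Nonempty := by
    intro D hD
    by_contra hempty
    apply hns
    rw [← top_le_iff, ← hD.2.2]
    rw [Submodule.span_le]
    rintro - ⟨d, hdD, rfl⟩
    have hdC₀ : d ∉ C₀ := fun hc => hempty ⟨d, Finset.mem_inter.mpr ⟨hc, hdD⟩⟩
    have := Finset.mem_filter.not.mp hdC₀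
    push_neg at this
    exact this (Finset.mem_univ d)
  obtain ⟨C, hCsub, hcoc⟩ := exists_cocircuit_subset _ hhit
  rw [prodPoly_factor X (hCsub.trans hC₀Z)]
  exact Ideal.mul_mem_right _ _ (Ideal.subset_span ⟨C, hcoc, rfl⟩)

lemma Jideal_bases_le {𝔅' : Set (Finset (Fin N))} (hsub : 𝔅' ⊆ basesOn X Finset.univ) :
    Jideal X Finset.univ (basesOn X Finset.univ) ≤ Jideal X Finset.univ 𝔅' := by
  apply Ideal.span_le.mpr
  rintro - ⟨C, hC, rfl⟩
  exact prod_mem_Jideal_of_subset_cocircuit X (fun B hB => hC.2.1 B (hsub hB))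

/-- Key consequence of the forward exchange property ("Claim E"):
if `Z` hits every basis of `𝔅'` and the vector at `w ∈ Z` lies in the span of the
earlier vectors outside `Z`, then no `B' ∈ 𝔅'` meets `Z` exactly in `{w}`. -/
lemma claimE {𝔅' : Set (Finset (Fin N))} (hsub : 𝔅' ⊆ basesOn X Finset.univ)
    (hfe : forwardExchange X 𝔅') {Z : Finset (Fin N)}
    (hhit : ∀ B ∈ 𝔅', (Z ∩ B).Nonempty) {w : Fin N}
    (hw : X w ∈ Submodule.span ℝ (X '' {a | a ∉ Z ∧ a < w}))
    {B' : Finset (Fin N)} (hB' : B' ∈ 𝔅') : Z ∩ B' ≠ {w} := by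
  classical
  suffices H : ∀ n : ℕ, ∀ B' ∈ 𝔅', (∑ b ∈ B', (b : ℕ)) = n → Z ∩ B' ≠ {w} from
    H _ B' hB' rfl
  intro n
  induction n using Nat.strong_induction_on with
  | _ n ih =>
  intro B' hB' hsum hZB
  have hwZB : w ∈ Z ∩ B' := by rw [hZB]; exact Finset.mem_singleton_self w
  have hwZ : w ∈ Z := (Finset.mem_inter.mp hwZB).1
  have hwB' : w ∈ B' := (Finset.mem_inter.mp hwZB).2
  have hZBother : ∀ e ∈ B', e ≠ w → e ∉ Z := by
    intro e he hne heZ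
    exact hne (Finset.mem_singleton.mp (hZB ▸ Finset.mem_inter.mpr ⟨heZ, he⟩))
  have hind := (hsub hB').2.1
  have hspan := (hsub hB').2.2
  -- U := span of the part of B' before w
  have hXwU : X w ∉ Submodule.span ℝ (X '' {e | e ∈ B' ∧ e < w}) := by
    refine not_mem_span_of_indep X hind hwB' ?_ ?_
    · rintro e ⟨he, _⟩; exact he
    · rintro ⟨_, hlt⟩; exact lt_irrefl w hlt
  have hex : ∃ a : Fin N, a ∉ Z ∧ a < w ∧
      X a ∉ Submodule.span ℝ (X '' {e | e ∈ B' ∧ e < w}) := by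
    by_contra hc
    push_neg at hc
    apply hXwU
    refine Submodule.span_le.mpr ?_ hw
    rintro - ⟨a, ⟨haZ, haw⟩, rfl⟩
    exact hc a haZ haw
  obtain ⟨a, haZ, haw, haU⟩ := hex
  have haB' : a ∉ B' := by
    intro haB'
    exact haU (Submodule.subset_span ⟨a, ⟨haB', haw⟩, rfl⟩)
  have hnext : ¬ isExtActive X B' a := by
    rintro ⟨-, hmem⟩
    apply haU
    refine Submodule.span_mono (Set.image_mono ?_) hmem
    rintro e ⟨heB, hea⟩
    exact ⟨heB, lt_of_le_of_lt hea haw⟩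
  have hXa0 : X a ≠ 0 := by
    intro h0
    exact haU (by rw [h0]; exact Submodule.zero_mem _)
  obtain ⟨b, hbB', hble, hbnlt⟩ := exists_level X hspan hXa0
  have hwb : w ≤ b := by
    by_contra hc
    push_neg at hc
    apply haU
    refine Submodule.span_mono (Set.image_mono ?_) hble
    rintro e ⟨heB, heb⟩
    exact ⟨heB, lt_of_le_of_lt heb hc⟩
  have hB'' : insert a (B'.erase b) ∈ 𝔅' := hfe B' hB' b hbB' a hble hbnlt hnext
  rcases eq_or_lt_of_le hwb with rfl | hwltb
  · -- b = w : the new basis misses Z entirely, contradiction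
    obtain ⟨z, hz⟩ := hhit _ hB''
    rcases Finset.mem_insert.mp (Finset.mem_inter.mp hz).2 with rfl | hz'
    · exact haZ (Finset.mem_inter.mp hz).1
    · exact hZBother z (Finset.mem_of_mem_erase hz') (Finset.ne_of_mem_erase hz')
        (Finset.mem_inter.mp hz).1
  · -- b > w : apply the induction hypothesis to the new basis
    have hae : a ∉ B'.erase b := fun hc => haB' (Finset.mem_of_mem_erase hc)
    have h1 : ∑ x ∈ insert a (B'.erase b), (x : ℕ) = (a : ℕ) + ∑ x ∈ B'.erase b, (x : ℕ) :=
      Finset.sum_insert hae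
    have h2 : (∑ x ∈ B'.erase b, (x : ℕ)) + (b : ℕ) = ∑ x ∈ B', (x : ℕ) :=
      Finset.sum_erase_add _ _ hbB'
    have hlt : (∑ x ∈ insert a (B'.erase b), (x : ℕ)) < n := by
      have hab : (a : ℕ) < (b : ℕ) := lt_trans haw hwltb
      omega
    apply ih _ hlt _ hB'' rfl
    ext z
    simp only [Finset.mem_inter, Finset.mem_insert, Finset.mem_singleton]
    constructor
    · rintro ⟨hzZ, rfl | hz'⟩
      · exact absurd hzZ haZ
      · have := Finset.mem_singleton.mp
          (hZB ▸ Finset.mem_inter.mpr ⟨hzZ, Finset.mem_of_mem_erase hz'⟩)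
        exact this
    · rintro rfl
      refine ⟨hwZ, Or.inr (Finset.mem_erase.mpr ⟨ne_of_lt hwltb, hwB'⟩)⟩

/-- The exchange-order lemma: if some `B' ∈ 𝔅'` is contained in `D ∪ E(D)`
for a basis `D`, then `D ∈ 𝔅'`. -/
lemma L4 {𝔅' : Set (Finset (Fin N))} (hsub : 𝔅' ⊆ basesOn X Finset.univ)
    (hfe : forwardExchange X 𝔅') {D : Finset (Fin N)} (hD : D ∈ basesOn X Finset.univ)
    {B' : Finset (Fin N)} (hB' : B' ∈ 𝔅')
    (hBD : ∀ b ∈ B', b ∈ D ∨ isExtActive X D b) : D ∈ 𝔅' := by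
  classical
  suffices H : ∀ n : ℕ, ∀ B' ∈ 𝔅', (∑ b ∈ B', (b : ℕ)) = n →
      (∀ b ∈ B', b ∈ D ∨ isExtActive X D b) → D ∈ 𝔅' from H _ B' hB' rfl hBD
  intro n
  induction n using Nat.strong_induction_on with
  | _ n ih =>
  intro B' hB' hsum hBD
  by_cases hcase : ∃ d ∈ D, d ∉ B' ∧ ¬ isExtActive X B' d
  · obtain ⟨d, hdD, hdB', hdnext⟩ := hcase
    have hXd0 : X d ≠ 0 := by
      intro h0
      have := not_mem_span_of_indep X hD.2.1 hdD (S := (∅ : Set (Fin N)))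
        (Set.empty_subset _) (Set.notMem_empty d)
      rw [h0] at this
      exact this (by simp)
    obtain ⟨w', hw'B', hle, hnlt⟩ := exists_level X (hsub hB').2.2 hXd0
    have hd_not_le : X d ∉ Submodule.span ℝ (X '' {e | e ∈ B' ∧ e ≤ d}) := by
      intro hc
      exact hdnext ⟨hdB', hc⟩
    have hdw' : d < w' := by
      by_contra hc
      push_neg at hc
      apply hd_not_le
      refine Submodule.span_mono (Set.image_mono ?_) hle
      rintro e ⟨heB, hew⟩
      exact ⟨heB, le_trans hew hc⟩
    have hB₂ : insert d (B'.erase w') ∈ 𝔅' := hfe B' hB' w' hw'B' d hle hnlt hdnext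
    have hde : d ∉ B'.erase w' := fun hc => hdB' (Finset.mem_of_mem_erase hc)
    have h1 : ∑ x ∈ insert d (B'.erase w'), (x : ℕ) = (d : ℕ) + ∑ x ∈ B'.erase w', (x : ℕ) :=
      Finset.sum_insert hde
    have h2 : (∑ x ∈ B'.erase w', (x : ℕ)) + (w' : ℕ) = ∑ x ∈ B', (x : ℕ) :=
      Finset.sum_erase_add _ _ hw'B'
    have hlt : (∑ x ∈ insert d (B'.erase w'), (x : ℕ)) < n := by
      have hdw2 : (d : ℕ) < (w' : ℕ) := hdw'
      omega
    apply ih _ hlt _ hB₂ rfl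
    intro b hb
    rcases Finset.mem_insert.mp hb with rfl | hb'
    · exact Or.inl hdD
    · exact hBD b (Finset.mem_of_mem_erase hb')
  · push_neg at hcase
    suffices hBD' : B' = D by rw [← hBD']; exact hB'
    by_contra hne
    have hsd : ((B' \ D) ∪ (D \ B')).Nonempty := by
      rcases Finset.eq_empty_or_nonempty ((B' \ D) ∪ (D \ B')) with he | h
      · exfalso
        rw [Finset.union_eq_empty] at he
        exact hne (Finset.Subset.antisymm
          ((Finset.sdiff_eq_empty_iff_subset).mp he.1)
          ((Finset.sdiff_eq_empty_iff_subset).mp he.2))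
      · exact h
    obtain ⟨a, haU, hamin⟩ := Finset.exists_min_image _ id hsd
    have hmin' : ∀ e : Fin N, e < a → (e ∈ B' ↔ e ∈ D) := by
      intro e he
      constructor
      · intro hmem
        by_contra hc
        exact absurd (hamin e (Finset.mem_union_left _ (Finset.mem_sdiff.mpr ⟨hmem, hc⟩)))
          (not_le.mpr he)
      · intro hmem
        by_contra hc
        exact absurd (hamin e (Finset.mem_union_right _ (Finset.mem_sdiff.mpr ⟨hmem, hc⟩)))
          (not_le.mpr he)
    rcases Finset.mem_union.mp haU with haB | haD
    · have haB' : a ∈ B' := (Finset.mem_sdiff.mp haB).1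
      have haD' : a ∉ D := (Finset.mem_sdiff.mp haB).2
      rcases hBD a haB' with h | h
      · exact haD' h
      · refine not_mem_span_of_indep X (hsub hB').2.1 haB'
          (S := {e | e ∈ D ∧ e ≤ a}) ?_ ?_ h.2
        · rintro e ⟨heD, hea⟩
          have : e ≠ a := fun hc => haD' (hc ▸ heD)
          exact (hmin' e (lt_of_le_of_ne hea this)).mpr heD
        · rintro ⟨haD2, -⟩
          exact haD' haD2
    · have haD' : a ∈ D := (Finset.mem_sdiff.mp haD).1
      have haB' : a ∉ B' := (Finset.mem_sdiff.mp haD).2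
      have h := hcase a haD' haB'
      refine not_mem_span_of_indep X hD.2.1 haD'
        (S := {e | e ∈ B' ∧ e ≤ a}) ?_ ?_ h.2
      · rintro e ⟨heB, hea⟩
        have : e ≠ a := fun hc => haB' (hc ▸ heB)
        exact (hmin' e (lt_of_le_of_ne hea this)).mp heB
      · rintro ⟨haB2, -⟩
        exact haB' haB2

/-- `Q_D ∈ 𝒥(X, 𝔅')` for every basis `D ∉ 𝔅'`. -/
lemma QB_mem_Jideal {𝔅' : Set (Finset (Fin N))} (hsub : 𝔅' ⊆ basesOn X Finset.univ)
    (hfe : forwardExchange X 𝔅') {D : Finset (Fin N)} (hD : D ∈ basesOn X Finset.univ)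
    (hDnot : D ∉ 𝔅') :
    QB X Finset.univ D ∈ Jideal X Finset.univ 𝔅' := by
  classical
  apply prod_mem_Jideal_of_subset_cocircuit
  intro B' hB'
  by_contra hempty
  apply hDnot
  apply L4 X hsub hfe hD hB'
  intro b hb
  have hbmem : b ∈ D ∪ extSetOn X Finset.univ D := by
    by_contra hc
    exact hempty ⟨b, Finset.mem_inter.mpr
      ⟨Finset.mem_sdiff.mpr ⟨Finset.mem_univ _, hc⟩, hb⟩⟩
  rcases Finset.mem_union.mp hbmem with h | h
  · exact Or.inl h
  · exact Or.inr (Finset.mem_filter.mp h).2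

end Stmt11
end Dev3
noncomputable section Dev4
open MvPolynomial Finset Submodule
namespace Stmt11
variable {r N : ℕ} (X : Fin N → Fin r → ℝ)

/-- The auxiliary module `𝒥(X) + span{Q_D : D ∈ 𝔅 \ 𝔅''}`. -/
def Mmod (𝔅'' : Set (Finset (Fin N))) : Submodule ℝ (MvPolynomial (Fin r) ℝ) :=
  (Jideal X Finset.univ (basesOn X Finset.univ)).restrictScalars ℝ ⊔
    Submodule.span ℝ ((fun D => QB X Finset.univ D) '' (basesOn X Finset.univ \ 𝔅''))

lemma mem_Mmod_of_J {𝔅'' : Set (Finset (Fin N))} {q : MvPolynomial (Fin r) ℝ}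
    (hq : q ∈ Jideal X Finset.univ (basesOn X Finset.univ)) : q ∈ Mmod X 𝔅'' :=
  Submodule.mem_sup_left hq

lemma mem_Mmod_QB {𝔅'' : Set (Finset (Fin N))} {D : Finset (Fin N)}
    (hD : D ∈ basesOn X Finset.univ) (hnot : D ∉ 𝔅'') :
    QB X Finset.univ D ∈ Mmod X 𝔅'' :=
  Submodule.mem_sup_right (Submodule.subset_span ⟨D, ⟨hD, hnot⟩, rfl⟩)

/-- The master reduction lemma: every monomial multiple of `p_Z`, for `Z` hitting every
basis in a forward-exchange family `𝔅''`, lies in `𝒥(X) + span{Q_D : D ∉ 𝔅''}`. -/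
lemma Tstar {𝔅'' : Set (Finset (Fin N))} (hsub : 𝔅'' ⊆ basesOn X Finset.univ)
    (hfe : forwardExchange X 𝔅'') :
    ∀ (γ : Fin r →₀ ℕ) (Z : Finset (Fin N)), (∀ B ∈ 𝔅'', (Z ∩ B).Nonempty) →
      (MvPolynomial.monomial γ (1:ℝ)) * prodPoly X Z ∈ Mmod X 𝔅'' := by
  classical
  set TOT := ∑ i ∈ (Finset.univ : Finset (Fin N)), ((i : ℕ) + 1) with hTOT
  suffices H : ∀ n : ℕ, ∀ (γ : Fin r →₀ ℕ) (Z : Finset (Fin N)),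
      ((γ.sum fun _ k => k) * (TOT + 1) + ∑ i ∈ Z, ((i : ℕ) + 1)) = n →
      (∀ B ∈ 𝔅'', (Z ∩ B).Nonempty) →
      (MvPolynomial.monomial γ (1:ℝ)) * prodPoly X Z ∈ Mmod X 𝔅'' from
    fun γ Z h => H _ γ Z rfl h
  intro n
  induction n using Nat.strong_induction_on with
  | _ n ih =>
  intro γ Z hn hhit
  by_cases hsp : Submodule.span ℝ (X '' ((Zᶜ : Finset (Fin N)) : Set (Fin N))) = ⊤
  · -- complement spans
    by_cases hγ : γ = 0
    · -- γ = 0 : greedy basis analysis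
      subst hγ
      rw [MvPolynomial.monomial_zero', MvPolynomial.C_1, one_mul]
      have hB₀bases : gr X Zᶜ ∈ basesOn X Finset.univ := gr_basesOn X hsp
      have hB₀Z : ∀ b ∈ gr X Zᶜ, b ∉ Z := fun b hb =>
        Finset.mem_compl.mp (gr_subset X Zᶜ hb)
      by_cases hW : ∃ w ∈ Z, w ∈ extSetOn X Finset.univ (gr X Zᶜ)
      · -- a reducible element exists
        obtain ⟨w, hwZ, hwE⟩ := hW
        have hwact : isExtActive X (gr X Zᶜ) w := (Finset.mem_filter.mp hwE).2
        have hw' : X w ∈ Submodule.span ℝ (X '' {a | a ∉ Z ∧ a < w}) := by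
          refine Submodule.span_mono (Set.image_mono ?_) hwact.2
          rintro e ⟨heB, hew⟩
          refine ⟨hB₀Z e heB, lt_of_le_of_ne hew ?_⟩
          intro hc
          exact hB₀Z e heB (hc ▸ hwZ)
        have hsetT : {a : Fin N | a ∉ Z ∧ a < w} =
            ((Zᶜ.filter (fun a => a < w) : Finset (Fin N)) : Set (Fin N)) := by
          ext a
          simp [Finset.mem_filter, Finset.mem_compl]
        obtain ⟨c, hc⟩ := exists_rep X (T := Zᶜ.filter (fun a => a < w))
          (by rw [← hsetT]; exact hw')
        have hfac : prodPoly X Z = ∑ a ∈ Zᶜ.filter (fun a => a < w),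
            c a • (MvPolynomial.monomial 0 (1:ℝ) * prodPoly X (insert a (Z.erase w))) := by
          rw [prodPoly_erase X hwZ, hc]
          have hlin : linPoly (∑ a ∈ Zᶜ.filter (fun a => a < w), c a • X a) =
              ∑ a ∈ Zᶜ.filter (fun a => a < w), c a • linPoly (X a) := by
            rw [show linPoly (∑ a ∈ Zᶜ.filter (fun a => a < w), c a • X a) =
                linPolyL (∑ a ∈ Zᶜ.filter (fun a => a < w), c a • X a) from rfl, map_sum]
            exact Finset.sum_congr rfl fun a _ => by rw [map_smul]; rfl
          rw [hlin, Finset.sum_mul]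
          refine Finset.sum_congr rfl fun a ha => ?_
          have haZ : a ∉ Z.erase w :=
            fun hmem => Finset.mem_compl.mp ((Finset.mem_filter.mp ha).1)
              (Finset.mem_of_mem_erase hmem)
          rw [prodPoly_insert X haZ, MvPolynomial.monomial_zero', MvPolynomial.C_1, one_mul,
            smul_mul_assoc]
        rw [hfac]
        refine Submodule.sum_mem _ fun a ha => Submodule.smul_mem _ _ ?_
        have haC : a ∉ Z := Finset.mem_compl.mp (Finset.mem_filter.mp ha).1
        have haw : a < w := (Finset.mem_filter.mp ha).2
        have haZe : a ∉ Z.erase w := fun hmem => haC (Finset.mem_of_mem_erase hmem)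
        -- measure decreases
        have h1 : ∑ i ∈ insert a (Z.erase w), ((i : ℕ) + 1) =
            ((a : ℕ) + 1) + ∑ i ∈ Z.erase w, ((i : ℕ) + 1) := Finset.sum_insert haZe
        have h2 : (∑ i ∈ Z.erase w, ((i : ℕ) + 1)) + ((w : ℕ) + 1) =
            ∑ i ∈ Z, ((i : ℕ) + 1) := Finset.sum_erase_add _ _ hwZ
        have hlt : ((0 : Fin r →₀ ℕ).sum fun _ k => k) * (TOT + 1) +
            ∑ i ∈ insert a (Z.erase w), ((i : ℕ) + 1) < n := by
          rw [Finsupp.sum_zero_index] at hn ⊢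
          have haw' : (a : ℕ) < (w : ℕ) := haw
          omega
        refine ih _ hlt _ _ rfl ?_
        -- the new set still hits every basis of 𝔅''
        intro B hB
        have hne : Z ∩ B ≠ {w} := claimE X hsub hfe hhit hw' hB
        obtain ⟨z, hz⟩ := hhit B hB
        have hexz : ∃ z ∈ Z ∩ B, z ≠ w := by
          by_contra hcon
          push_neg at hcon
          apply hne
          have hwZB : w ∈ Z ∩ B := by
            have := hcon z hz
            rwa [this] at hz
          refine Finset.eq_singleton_iff_unique_mem.mpr ⟨hwZB, fun x hx => hcon x hx⟩
        obtain ⟨z', hz', hz'w⟩ := hexz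
        exact ⟨z', Finset.mem_inter.mpr
          ⟨Finset.mem_insert_of_mem
            (Finset.mem_erase.mpr ⟨hz'w, (Finset.mem_inter.mp hz').1⟩),
            (Finset.mem_inter.mp hz').2⟩⟩
      · -- no reducible element : Z is exactly the complement of B₀ ∪ E(B₀)
        push_neg at hW
        have hZeq : Z = Finset.univ \ (gr X Zᶜ ∪ extSetOn X Finset.univ (gr X Zᶜ)) := by
          ext z
          constructor
          · intro hzZ
            refine Finset.mem_sdiff.mpr ⟨Finset.mem_univ _, ?_⟩
            intro hc
            rcases Finset.mem_union.mp hc with h | h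
            · exact hB₀Z z h hzZ
            · exact hW z hzZ h
          · intro hz
            by_contra hzZ
            have hzc : z ∈ Zᶜ := Finset.mem_compl.mpr hzZ
            have hznB : z ∉ gr X Zᶜ ∪ extSetOn X Finset.univ (gr X Zᶜ) :=
              (Finset.mem_sdiff.mp hz).2
            have hz1 : z ∉ gr X Zᶜ := fun hc => hznB (Finset.mem_union_left _ hc)
            have hz2 : X z ∈ Submodule.span ℝ (X '' {a | a ∈ gr X Zᶜ ∧ a < z}) :=
              gr_reduce X hzc hz1
            apply hznB
            refine Finset.mem_union_right _ (Finset.mem_filter.mpr ⟨Finset.mem_univ _,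
              hz1, ?_⟩)
            refine Submodule.span_mono (Set.image_mono ?_) hz2
            rintro e ⟨h1, h2⟩
            exact ⟨h1, le_of_lt h2⟩
        have hB₀not : gr X Zᶜ ∉ 𝔅'' := by
          intro hc
          obtain ⟨z, hz⟩ := hhit _ hc
          exact hB₀Z z (Finset.mem_inter.mp hz).2 (Finset.mem_inter.mp hz).1
        have : prodPoly X Z = QB X Finset.univ (gr X Zᶜ) := by
          show prodPoly X Z =
            prodPoly X (Finset.univ \ (gr X Zᶜ ∪ extSetOn X Finset.univ (gr X Zᶜ)))
          rw [← hZeq]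
        rw [this]
        exact mem_Mmod_QB X hB₀bases hB₀not
    · -- γ ≠ 0 : absorb one variable into the product
      obtain ⟨i, hi⟩ : ∃ i, γ i ≠ 0 := by
        by_contra hc
        push_neg at hc
        exact hγ (Finsupp.ext hc)
      have hle : Finsupp.single i 1 ≤ γ := by
        rw [Finsupp.single_le_iff]
        omega
      set γ' := γ - Finsupp.single i 1 with hγ'
      have hγsum : γ' + Finsupp.single i 1 = γ := tsub_add_cancel_of_le hle
      have hmono : (MvPolynomial.monomial γ (1:ℝ)) =
          MvPolynomial.monomial γ' 1 * MvPolynomial.X i := by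
        rw [MvPolynomial.X, MvPolynomial.monomial_mul, mul_one, hγsum]
      have hXi : Pi.single i (1:ℝ) ∈ Submodule.span ℝ
          (X '' ((Zᶜ : Finset (Fin N)) : Set (Fin N))) := by
        rw [hsp]; trivial
      obtain ⟨c, hc⟩ := exists_rep X hXi
      have hXilin : (MvPolynomial.X i : MvPolynomial (Fin r) ℝ) =
          ∑ a ∈ Zᶜ, c a • linPoly (X a) := by
        rw [← linPoly_single i, hc]
        rw [show linPoly (∑ a ∈ Zᶜ, c a • X a) = linPolyL (∑ a ∈ Zᶜ, c a • X a) from rfl,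
          map_sum]
        exact Finset.sum_congr rfl fun a _ => by rw [map_smul]; rfl
      have hfac : (MvPolynomial.monomial γ (1:ℝ)) * prodPoly X Z =
          ∑ a ∈ Zᶜ, c a • (MvPolynomial.monomial γ' 1 * prodPoly X (insert a Z)) := by
        rw [hmono, mul_assoc, hXilin, Finset.sum_mul, Finset.mul_sum]
        refine Finset.sum_congr rfl fun a ha => ?_
        have haZ : a ∉ Z := Finset.mem_compl.mp ha
        rw [prodPoly_insert X haZ, smul_mul_assoc, mul_smul_comm]
      rw [hfac]
      refine Submodule.sum_mem _ fun a ha => Submodule.smul_mem _ _ ?_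
      have haZ : a ∉ Z := Finset.mem_compl.mp ha
      have hsum1 : (γ'.sum fun _ k => k) + 1 = (γ.sum fun _ k => k) := by
        conv_rhs => rw [← hγsum]
        rw [Finsupp.sum_add_index' (fun _ => rfl) (fun _ _ _ => rfl),
          Finsupp.sum_single_index rfl]
      have h3 : ∑ i ∈ insert a Z, ((i : ℕ) + 1) ≤ TOT :=
        Finset.sum_le_sum_of_subset (Finset.subset_univ _)
      have h4 : ((γ'.sum fun _ k => k) + 1) * (TOT + 1) =
          (γ'.sum fun _ k => k) * (TOT + 1) + (TOT + 1) := by ring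
      have hn' : (γ'.sum fun _ k => k) * (TOT + 1) + (TOT + 1) + ∑ i ∈ Z, ((i : ℕ) + 1)
          = n := by
        rw [← hsum1, h4] at hn
        exact hn
      have hlt : (γ'.sum fun _ k => k) * (TOT + 1) + ∑ i ∈ insert a Z, ((i : ℕ) + 1) < n := by
        omega
      refine ih _ hlt _ _ rfl (fun B hB => ?_)
      obtain ⟨z, hz⟩ := hhit B hB
      exact ⟨z, Finset.mem_inter.mpr ⟨Finset.mem_insert_of_mem (Finset.mem_inter.mp hz).1,
        (Finset.mem_inter.mp hz).2⟩⟩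
  · -- complement does not span : everything is in the ideal
    exact mem_Mmod_of_J X (Ideal.mul_mem_left _ _ (prod_mem_Jideal_of_not_spanning X hsp))

end Stmt11
end Dev4
noncomputable section Dev5
open MvPolynomial Finset Submodule
namespace Stmt11
variable {r N : ℕ} (X : Fin N → Fin r → ℝ)

lemma mem_kerIdeal_iff (I : Ideal (MvPolynomial (Fin r) ℝ)) (f : MvPolynomial (Fin r) ℝ) :
    f ∈ kerIdeal I ↔ ∀ q ∈ I, pairing q f = 0 := Iff.rfl

lemma pairing_sum_left {ι : Type*} (s : Finset ι) (q : ι → MvPolynomial (Fin r) ℝ)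
    (f : MvPolynomial (Fin r) ℝ) :
    pairing (∑ i ∈ s, q i) f = ∑ i ∈ s, pairing (q i) f := by
  classical
  induction s using Finset.induction_on with
  | empty => simp [pairing_zero_left]
  | insert _ _ h ih => rw [Finset.sum_insert h, pairing_add_left, ih, Finset.sum_insert h]

lemma pairing_zero_of_mem_Mmod {𝔅'' : Set (Finset (Fin N))} {q f : MvPolynomial (Fin r) ℝ}
    (hq : q ∈ Mmod X 𝔅'')
    (hf1 : ∀ p ∈ Jideal X Finset.univ (basesOn X Finset.univ), pairing p f = 0)
    (hf2 : ∀ D ∈ basesOn X Finset.univ, D ∉ 𝔅'' → pairing (QB X Finset.univ D) f = 0) :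
    pairing q f = 0 := by
  obtain ⟨y, hy, z, hz, rfl⟩ := Submodule.mem_sup.mp hq
  rw [pairing_add_left, hf1 y hy, zero_add]
  refine Submodule.span_induction ?_ ?_ ?_ ?_ hz
  · rintro p ⟨D, ⟨hD, hnot⟩, rfl⟩
    exact hf2 D hD hnot
  · exact pairing_zero_left f
  · intro p p' _ _ hp hp'
    rw [pairing_add_left, hp, hp', add_zero]
  · intro a p _ hp
    rw [pairing_smul_left, hp, mul_zero]

/-- Every element of `𝒥(X,𝔅')` pairs to zero with any `f` that is annihilated by
`𝒥(X)` and by the `Q_D`, `D ∉ 𝔅'`. -/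
lemma pairing_zero_of_mem_Jideal {𝔅' : Set (Finset (Fin N))}
    (hsub : 𝔅' ⊆ basesOn X Finset.univ) (hfe : forwardExchange X 𝔅')
    {f : MvPolynomial (Fin r) ℝ}
    (hf1 : ∀ p ∈ Jideal X Finset.univ (basesOn X Finset.univ), pairing p f = 0)
    (hf2 : ∀ D ∈ basesOn X Finset.univ, D ∉ 𝔅' → pairing (QB X Finset.univ D) f = 0) :
    ∀ q ∈ Jideal X Finset.univ 𝔅', pairing q f = 0 := by
  suffices H : ∀ q ∈ Jideal X Finset.univ 𝔅', ∀ g, pairing (g * q) f = 0 by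
    intro q hq
    have := H q hq 1
    rwa [one_mul] at this
  intro q hq
  refine Submodule.span_induction ?_ ?_ ?_ ?_ hq
  · rintro p ⟨C, hC, rfl⟩ g
    conv_lhs => rw [g.as_sum]
    rw [Finset.sum_mul, pairing_sum_left]
    refine Finset.sum_eq_zero fun α hα => ?_
    have hmono : MvPolynomial.monomial α (g.coeff α) * prodPoly X C =
        (g.coeff α) • (MvPolynomial.monomial α 1 * prodPoly X C) := by
      rw [← smul_mul_assoc, MvPolynomial.smul_monomial, smul_eq_mul, mul_one]
    rw [hmono, pairing_smul_left]
    have hmem : MvPolynomial.monomial α (1:ℝ) * prodPoly X C ∈ Mmod X 𝔅' :=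
      Tstar X hsub hfe α C (fun B hB => hC.2.1 B hB)
    rw [pairing_zero_of_mem_Mmod X hmem hf1 hf2, mul_zero]
  · intro g
    rw [mul_zero, pairing_zero_left]
  · intro p p' _ _ hp hp' g
    rw [mul_add, pairing_add_left, hp g, hp' g, add_zero]
  · intro a p _ hp g
    rw [smul_eq_mul, show g * (a * p) = (g * a) * p by ring]
    exact hp (g * a)

end Stmt11
end Dev5
/-- for `𝔅'` with the forward exchange property, the dual-basis
polynomials `R_B` (`B ∈ 𝔅'`) lie in `𝒟(X,𝔅')` and form a basis of `𝒟(X,𝔅')`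
dual to the basis `{Q_B : B ∈ 𝔅'}` of `𝒫(X,𝔅')`. -/
theorem statement11 {r N : ℕ} (X : Fin N → Fin r → ℝ)
    (hX : Submodule.span ℝ (Set.range X) = ⊤)
    (𝔅' : Set (Finset (Fin N))) (hne : 𝔅'.Nonempty)
    (hsub : 𝔅' ⊆ basesOn X Finset.univ)
    (hfe : forwardExchange X 𝔅')
    (R : ↥(basesOn X Finset.univ) → MvPolynomial (Fin r) ℝ)
    (hR : ∀ B : ↥(basesOn X Finset.univ),
      R B ∈ Dspace X Finset.univ (basesOn X Finset.univ) ∧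
        ∀ D ∈ basesOn X Finset.univ,
          pairing (QB X Finset.univ D) (R B) = if D = B.1 then 1 else 0) :
    (∀ B : ↥𝔅', R ⟨B.1, hsub B.2⟩ ∈ Dspace X Finset.univ 𝔅') ∧
    (∃ bD : Module.Basis ↥𝔅' ℝ ↥(Dspace X Finset.univ 𝔅'),
      ∀ B : ↥𝔅', (bD B : MvPolynomial (Fin r) ℝ) = R ⟨B.1, hsub B.2⟩) ∧
    (∃ bP : Module.Basis ↥𝔅' ℝ ↥(PspaceB X Finset.univ 𝔅'),
      ∀ B : ↥𝔅', (bP B : MvPolynomial (Fin r) ℝ) = QB X Finset.univ B.1) := by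
  classical
  haveI : Fintype ↥𝔅' := (Set.toFinite 𝔅').fintype
  set v : ↥𝔅' → MvPolynomial (Fin r) ℝ := fun B => R ⟨B.1, hsub B.2⟩ with hv
  have hfeE : forwardExchange X (∅ : Set (Finset (Fin N))) :=
    fun B hB => absurd hB (Set.notMem_empty B)
  have hsubE : (∅ : Set (Finset (Fin N))) ⊆ basesOn X Finset.univ := Set.empty_subset _
  have hJXle : Jideal X Finset.univ (basesOn X Finset.univ) ≤ Jideal X Finset.univ 𝔅' :=
    Stmt11.Jideal_bases_le X hsub
  have hRker : ∀ B : ↥𝔅', ∀ p ∈ Jideal X Finset.univ (basesOn X Finset.univ),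
      pairing p (v B) = 0 := fun B => (hR ⟨B.1, hsub B.2⟩).1
  have part1 : ∀ B : ↥𝔅', R ⟨B.1, hsub B.2⟩ ∈ Dspace X Finset.univ 𝔅' := by
    intro B
    rw [show Dspace X Finset.univ 𝔅' = kerIdeal (Jideal X Finset.univ 𝔅') from rfl,
      Stmt11.mem_kerIdeal_iff]
    apply Stmt11.pairing_zero_of_mem_Jideal X hsub hfe
    · exact hRker B
    · intro D hD hnot
      have h2 := (hR ⟨B.1, hsub B.2⟩).2 D hD
      rwa [if_neg (fun h => hnot (by rw [h]; exact B.2))] at h2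
  have hdual : ∀ (B : ↥𝔅') (D : Finset (Fin N)), D ∈ basesOn X Finset.univ →
      pairing (QB X Finset.univ D) (v B) = if D = B.1 then 1 else 0 :=
    fun B D hD => (hR ⟨B.1, hsub B.2⟩).2 D hD
  have hsum_pair : ∀ (D : Finset (Fin N)), D ∈ basesOn X Finset.univ → ∀ c : ↥𝔅' → ℝ,
      pairing (QB X Finset.univ D) (∑ B, c B • v B) =
        if hD : D ∈ 𝔅' then c ⟨D, hD⟩ else 0 := by
    intro D hD c
    rw [Stmt11.pairing_sum]
    have hterm : ∀ B : ↥𝔅', pairing (QB X Finset.univ D) (c B • v B) =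
        c B * (if D = B.1 then 1 else 0) := fun B => by
      rw [pairing_smul, hdual B D hD]
    rw [Finset.sum_congr rfl (fun B _ => hterm B)]
    by_cases hDm : D ∈ 𝔅'
    · rw [dif_pos hDm, Finset.sum_eq_single (⟨D, hDm⟩ : ↥𝔅')]
      · rw [if_pos rfl, mul_one]
      · intro B _ hBne
        rw [if_neg (fun h => hBne (Subtype.ext h.symm)), mul_zero]
      · intro h; exact absurd (Finset.mem_univ _) h
    · rw [dif_neg hDm]
      refine Finset.sum_eq_zero fun B _ => ?_
      rw [if_neg (fun h => hDm (by rw [h]; exact B.2)), mul_zero]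
  have hDle : Dspace X Finset.univ 𝔅' ≤ Submodule.span ℝ (Set.range v) := by
    intro f hf
    have hfker : ∀ q ∈ Jideal X Finset.univ 𝔅', pairing q f = 0 := hf
    have hzero : f - ∑ B, (pairing (QB X Finset.univ B.1) f) • v B = 0 := by
      apply Stmt11.eq_zero_of_pairing_monomial
      intro α
      have hmem : (MvPolynomial.monomial α (1:ℝ)) ∈ Stmt11.Mmod X (∅ : Set (Finset (Fin N))) := by
        have h := Stmt11.Tstar X hsubE hfeE α ∅ (fun B hB => absurd hB (Set.notMem_empty B))
        rwa [show prodPoly X ∅ = 1 from Finset.prod_empty, mul_one] at h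
      apply Stmt11.pairing_zero_of_mem_Mmod X hmem
      · intro p hp
        rw [Stmt11.pairing_sub, hfker p (hJXle hp), Stmt11.pairing_sum]
        rw [Finset.sum_eq_zero fun B _ => by
          rw [pairing_smul, hRker B p hp, mul_zero]]
        ring
      · intro D hD _
        rw [Stmt11.pairing_sub, hsum_pair D hD _]
        by_cases hDm : D ∈ 𝔅'
        · rw [dif_pos hDm, sub_self]
        · rw [dif_neg hDm, sub_zero]
          exact hfker _ (Stmt11.QB_mem_Jideal X hsub hfe hD hDm)
    have hfeq : f = ∑ B, (pairing (QB X Finset.univ B.1) f) • v B := by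
      have := sub_eq_zero.mp hzero
      exact this
    rw [hfeq]
    exact Submodule.sum_mem _ fun B _ =>
      Submodule.smul_mem _ _ (Submodule.subset_span ⟨B, rfl⟩)
  have hDeq : Dspace X Finset.univ 𝔅' = Submodule.span ℝ (Set.range v) := by
    refine le_antisymm hDle ?_
    rw [Submodule.span_le]
    rintro - ⟨B, rfl⟩
    exact part1 B
  have hindR : LinearIndependent ℝ v := by
    rw [Fintype.linearIndependent_iff]
    intro c hc B₀
    have h := hsum_pair B₀.1 (hsub B₀.2) c
    rw [hc, pairing_zero, dif_pos B₀.2] at h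
    simpa using h.symm
  have hindQ : LinearIndependent ℝ (fun B : ↥𝔅' => QB X Finset.univ B.1) := by
    rw [Fintype.linearIndependent_iff]
    intro c hc B₀
    have h := congrArg (fun p => pairing p (v B₀)) hc
    simp only [Stmt11.pairing_zero_left] at h
    rw [Stmt11.pairing_sum_left] at h
    have hterm : ∀ B : ↥𝔅', pairing (c B • QB X Finset.univ B.1) (v B₀) =
        c B * (if B.1 = B₀.1 then 1 else 0) := fun B => by
      rw [Stmt11.pairing_smul_left, hdual B₀ B.1 (hsub B.2)]
    rw [Finset.sum_congr rfl (fun B _ => hterm B)] at h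
    rw [Finset.sum_eq_single B₀] at h
    · rw [if_pos rfl, mul_one] at h
      exact h
    · intro B _ hBne
      rw [if_neg (fun hx => hBne (Subtype.ext hx)), mul_zero]
    · intro hx; exact absurd (Finset.mem_univ _) hx
  have hPeq : PspaceB X Finset.univ 𝔅' =
      Submodule.span ℝ (Set.range (fun B : ↥𝔅' => QB X Finset.univ B.1)) := by
    unfold PspaceB
    congr 1
    ext p
    constructor
    · rintro ⟨B, hB, rfl⟩; exact ⟨⟨B, hB⟩, rfl⟩
    · rintro ⟨B, rfl⟩; exact ⟨B.1, B.2, rfl⟩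
  refine ⟨part1, ⟨(Module.Basis.span hindR).map (LinearEquiv.ofEq _ _ hDeq.symm), ?_⟩,
    ⟨(Module.Basis.span hindQ).map (LinearEquiv.ofEq _ _ hPeq.symm), ?_⟩⟩
  · intro B
    rw [Module.Basis.map_apply, LinearEquiv.coe_ofEq_apply, Module.Basis.span_apply]
  · intro B
    rw [Module.Basis.map_apply, LinearEquiv.coe_ofEq_apply, Module.Basis.span_apply]
end

section
/- Let 𝔅' ⊆ 𝔅(X) be nonempty. For η ∈ ℝ^r∖{0}, define κ(η) := max over B ∈ 𝔅' of #{x ∈ X∖(B∪E(B)) : η·x ≠ 0}, and let ℐ(X,𝔅') ⊆ ℝ[t_1,…,t_r] be the ideal generated by {p̃_η^{κ(η)+1} : η ∈ ℝ^r∖{0}}. Then 𝒫(X,𝔅') ⊆ ker ℐ(X,𝔅'). -/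
open MvPolynomial

lemma pairing_eq_sum {r : ℕ} (p f : MvPolynomial (Fin r) ℝ) (s : Finset (Fin r →₀ ℕ))
    (hs : p.support ⊆ s) :
    pairing p f = ∑ α ∈ s, (∏ i, ((α i).factorial : ℝ)) * p.coeff α * f.coeff α := by
  unfold pairing
  refine Finset.sum_subset hs fun α _ hα => ?_
  rw [notMem_support_iff.mp hα]; ring

lemma pairing_zero_left {r : ℕ} (f : MvPolynomial (Fin r) ℝ) : pairing 0 f = 0 := by
  simp [pairing]

lemma pairing_add_left {r : ℕ} (p q f : MvPolynomial (Fin r) ℝ) :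
    pairing (p + q) f = pairing p f + pairing q f := by
  classical
  rw [pairing_eq_sum (p + q) f (p.support ∪ q.support) (support_add),
      pairing_eq_sum p f (p.support ∪ q.support) Finset.subset_union_left,
      pairing_eq_sum q f (p.support ∪ q.support) Finset.subset_union_right,
      ← Finset.sum_add_distrib]
  exact Finset.sum_congr rfl fun α _ => by rw [coeff_add]; ring

lemma pairing_smul_left {r : ℕ} (c : ℝ) (p f : MvPolynomial (Fin r) ℝ) :
    pairing (c • p) f = c * pairing p f := by
  classical
  rw [pairing_eq_sum (c • p) f p.support (Finsupp.support_smul), pairing, Finset.mul_sum]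
  exact Finset.sum_congr rfl fun α _ => by rw [coeff_smul, smul_eq_mul]; ring

lemma pairing_sum_left {r : ℕ} {ι : Type*} (s : Finset ι) (p : ι → MvPolynomial (Fin r) ℝ)
    (f : MvPolynomial (Fin r) ℝ) :
    pairing (∑ i ∈ s, p i) f = ∑ i ∈ s, pairing (p i) f := by
  classical
  induction s using Finset.induction_on with
  | empty => simp [pairing_zero_left]
  | insert _ _ h ih => rw [Finset.sum_insert h, Finset.sum_insert h, pairing_add_left, ih]

lemma pairing_sum_right {r : ℕ} {ι : Type*} (q : MvPolynomial (Fin r) ℝ) (s : Finset ι)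
    (f : ι → MvPolynomial (Fin r) ℝ) :
    pairing q (∑ i ∈ s, f i) = ∑ i ∈ s, pairing q (f i) := by
  classical
  induction s using Finset.induction_on with
  | empty => simp [pairing_zero]
  | insert _ _ h ih => rw [Finset.sum_insert h, Finset.sum_insert h, pairing_add, ih]

lemma pairing_monomial {r : ℕ} (q : MvPolynomial (Fin r) ℝ) (β : Fin r →₀ ℕ) (c : ℝ) :
    pairing q (monomial β c) = (∏ i, ((β i).factorial : ℝ)) * q.coeff β * c := by
  unfold pairing
  rw [Finset.sum_eq_single β]
  · rw [coeff_monomial, if_pos rfl]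
  · intro α _ hne
    rw [coeff_monomial, if_neg (fun h => hne h.symm), mul_zero]
  · intro h
    rw [notMem_support_iff.mp h]; ring

lemma factorial_prod_sub {r : ℕ} (β : Fin r →₀ ℕ) (i : Fin r) (h : β i ≠ 0) :
    (∏ j, ((β j).factorial : ℝ)) =
      (∏ j, (((β - Finsupp.single i 1 : Fin r →₀ ℕ) j).factorial : ℝ)) * (β i : ℝ) := by
  rw [← Finset.prod_erase_mul _ _ (Finset.mem_univ i),
      ← Finset.prod_erase_mul _ _ (Finset.mem_univ i)]
  have h1 : ∀ j ∈ Finset.univ.erase i,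
      (((β - Finsupp.single i 1 : Fin r →₀ ℕ) j).factorial : ℝ) = ((β j).factorial : ℝ) := by
    intro j hj
    rw [Finsupp.tsub_apply, Finsupp.single_apply,
      if_neg (fun hh => (Finset.mem_erase.mp hj).1 hh.symm), Nat.sub_zero]
  rw [Finset.prod_congr rfl h1, mul_assoc]
  congr 1
  rw [Finsupp.tsub_apply, Finsupp.single_apply, if_pos rfl]
  rw [← Nat.cast_mul, mul_comm ((β i - 1).factorial) (β i),
    Nat.mul_factorial_pred h]

lemma pairing_mul_X {r : ℕ} (g f : MvPolynomial (Fin r) ℝ) (i : Fin r) :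
    pairing (g * X i) f = pairing g (pderiv i f) := by
  classical
  induction f using MvPolynomial.induction_on' with
  | add p q hp hq => rw [map_add, pairing_add, pairing_add, hp, hq]
  | monomial β c =>
    rw [pderiv_monomial, pairing_monomial, pairing_monomial, coeff_mul_X']
    by_cases h : β i = 0
    · simp [h, Finsupp.mem_support_iff]
    · rw [if_pos (Finsupp.mem_support_iff.mpr h), factorial_prod_sub β i h]
      push_cast
      ring

lemma dirDeriv_apply {r : ℕ} (u : Fin r → ℝ) (f : MvPolynomial (Fin r) ℝ) :
    dirDeriv u f = ∑ i, u i • pderiv i f := by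
  simp [dirDeriv]

lemma pairing_mul_lin {r : ℕ} (η : Fin r → ℝ) (g f : MvPolynomial (Fin r) ℝ) :
    pairing (g * linPoly η) f = pairing g (dirDeriv η f) := by
  have hL : g * linPoly η = ∑ i, η i • (g * X i) := by
    rw [linPoly, Finset.mul_sum]
    exact Finset.sum_congr rfl fun i _ => by rw [smul_eq_C_mul]; ring
  rw [hL, pairing_sum_left, dirDeriv_apply, pairing_sum_right]
  refine Finset.sum_congr rfl fun i _ => ?_
  rw [pairing_smul_left, pairing_smul, pairing_mul_X]

lemma pairing_mul_lin_pow {r : ℕ} (η : Fin r → ℝ) (m : ℕ) (g f : MvPolynomial (Fin r) ℝ) :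
    pairing (g * linPoly η ^ m) f = pairing g ((dirDeriv η ^ m) f) := by
  induction m generalizing g f with
  | zero => simp
  | succ n ih =>
    rw [pow_succ, ← mul_assoc, pairing_mul_lin, ih, pow_succ, Module.End.mul_apply]

noncomputable section
open MvPolynomial

lemma dirDeriv_linPoly {r : ℕ} (η u : Fin r → ℝ) :
    dirDeriv η (linPoly u) = MvPolynomial.C (∑ k, η k * u k) := by
  classical
  have hp : ∀ i, pderiv i (linPoly u) = MvPolynomial.C (u i) := by
    intro i
    rw [linPoly, map_sum, Finset.sum_eq_single i]
    · rw [pderiv_C_mul, pderiv_X_self, mul_one]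
    · intro j _ hne
      rw [pderiv_C_mul, pderiv_X_of_ne hne, mul_zero]
    · intro h; exact absurd (Finset.mem_univ i) h
  rw [dirDeriv_apply, map_sum]
  refine Finset.sum_congr rfl fun i _ => ?_
  rw [hp, smul_eq_C_mul, ← C_mul]

lemma dirDeriv_mul {r : ℕ} (η : Fin r → ℝ) (a b : MvPolynomial (Fin r) ℝ) :
    dirDeriv η (a * b) = dirDeriv η a * b + a * dirDeriv η b := by
  simp only [dirDeriv_apply, pderiv_mul, smul_add, Finset.sum_add_distrib,
    Finset.sum_mul, Finset.mul_sum, smul_mul_assoc, mul_smul_comm]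

lemma prodPoly_insert {r N : ℕ} (X : Fin N → Fin r → ℝ) {a : Fin N} {s : Finset (Fin N)}
    (ha : a ∉ s) : prodPoly X (insert a s) = linPoly (X a) * prodPoly X s := by
  simp [prodPoly, Finset.prod_insert ha]

lemma dirDeriv_prodPoly {r N : ℕ} (η : Fin r → ℝ) (X : Fin N → Fin r → ℝ)
    (Y : Finset (Fin N)) :
    dirDeriv η (prodPoly X Y) =
      ∑ j ∈ Y, (∑ k, η k * X j k) • prodPoly X (Y.erase j) := by
  classical
  induction Y using Finset.induction_on with
  | empty => simp [prodPoly, dirDeriv_apply]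
  | @insert a s ha ih =>
    have key : ∀ j ∈ s, prodPoly X ((insert a s).erase j)
        = linPoly (X a) * prodPoly X (s.erase j) := by
      intro j hj
      rw [Finset.erase_insert_of_ne (fun h : a = j => ha (h ▸ hj)),
        prodPoly_insert X (fun h => ha (Finset.mem_of_mem_erase h))]
    rw [prodPoly_insert X ha, dirDeriv_mul, dirDeriv_linPoly, ih,
      Finset.sum_insert ha, Finset.erase_insert ha, ← smul_eq_C_mul, Finset.mul_sum]
    congr 1
    refine Finset.sum_congr rfl fun j hj => ?_
    rw [key j hj, mul_smul_comm]

lemma dirDeriv_pow_prod {r N : ℕ} (η : Fin r → ℝ) (X : Fin N → Fin r → ℝ) :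
    ∀ (m : ℕ) (Y : Finset (Fin N)),
      (Y.filter (fun j => (∑ k, η k * X j k) ≠ 0)).card < m →
      (dirDeriv η ^ m) (prodPoly X Y) = 0 := by
  classical
  intro m
  induction m with
  | zero => exact fun Y h => absurd h (Nat.not_lt_zero _)
  | succ n ih =>
    intro Y h
    rw [pow_succ, Module.End.mul_apply, dirDeriv_prodPoly, map_sum]
    refine Finset.sum_eq_zero fun j hj => ?_
    rw [map_smul]
    by_cases hc : (∑ k, η k * X j k) = 0
    · rw [hc, zero_smul]
    · have hjf : j ∈ Y.filter (fun j => (∑ k, η k * X j k) ≠ 0) :=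
        Finset.mem_filter.mpr ⟨hj, hc⟩
      have hpos := Finset.card_pos.mpr ⟨j, hjf⟩
      rw [ih (Y.erase j) (by rw [Finset.filter_erase, Finset.card_erase_of_mem hjf]; omega),
        smul_zero]

/-- `𝒫(X,𝔅') ⊆ ker ℐ(X,𝔅')` for the power ideal with exponents
`κ(η) + 1`, `κ(η) = max_{B ∈ 𝔅'} #{x ∈ X∖(B∪E(B)) : η·x ≠ 0}`. -/
theorem statement15 {r N : ℕ} (X : Fin N → Fin r → ℝ)
    (hX : Submodule.span ℝ (Set.range X) = ⊤)
    (𝔅' : Set (Finset (Fin N))) (hne : 𝔅'.Nonempty)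
    (hsub : 𝔅' ⊆ basesOn X Finset.univ) :
    PspaceB X Finset.univ 𝔅' ≤
      kerIdeal (Ideal.span {q : MvPolynomial (Fin r) ℝ | ∃ η : Fin r → ℝ, η ≠ 0 ∧
        q = linPoly η ^
          (sSup {m : ℕ | ∃ B ∈ 𝔅', m = Set.ncard
              {j : Fin N | j ∉ B ∪ extSetOn X Finset.univ B ∧
                (∑ k, η k * X j k) ≠ 0}} + 1)}) := by
  classical
  rw [PspaceB]
  rw [Submodule.span_le]
  rintro p ⟨B, hB, rfl⟩
  set S : Set (MvPolynomial (Fin r) ℝ) :=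
    {q : MvPolynomial (Fin r) ℝ | ∃ η : Fin r → ℝ, η ≠ 0 ∧
      q = linPoly η ^
        (sSup {m : ℕ | ∃ B ∈ 𝔅', m = Set.ncard
            {j : Fin N | j ∉ B ∪ extSetOn X Finset.univ B ∧
              (∑ k, η k * X j k) ≠ 0}} + 1)} with hS
  have H : ∀ q ∈ Ideal.span S, ∀ g, pairing (g * q) (QB X Finset.univ B) = 0 := by
    intro q hq
    induction hq using Submodule.span_induction with
    | zero => intro g; rw [mul_zero, pairing_zero_left]
    | add x y hx hy ihx ihy =>
      intro g
      rw [mul_add, pairing_add_left, ihx g, ihy g, add_zero]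
    | smul a x hx ihx =>
      intro g
      rw [smul_eq_mul, ← mul_assoc]
      exact ihx (g * a)
    | mem x hx =>
      obtain ⟨η, hη, rfl⟩ := hx
      intro g
      rw [pairing_mul_lin_pow]
      set κ := sSup {m : ℕ | ∃ B ∈ 𝔅', m = Set.ncard
          {j : Fin N | j ∉ B ∪ extSetOn X Finset.univ B ∧
            (∑ k, η k * X j k) ≠ 0}} with hκ
      have hvanish : (dirDeriv η ^ (κ + 1)) (QB X Finset.univ B) = 0 := by
        rw [QB]
        apply dirDeriv_pow_prod
        -- the filter-card equals the ncard for this B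
        have hset : {j : Fin N | j ∉ B ∪ extSetOn X Finset.univ B ∧
            (∑ k, η k * X j k) ≠ 0} =
            ↑(((Finset.univ \ (B ∪ extSetOn X Finset.univ B))).filter
              (fun j => (∑ k, η k * X j k) ≠ 0)) := by
          ext j
          simp [Finset.mem_sdiff]
        have hcard : ((Finset.univ \ (B ∪ extSetOn X Finset.univ B)).filter
            (fun j => (∑ k, η k * X j k) ≠ 0)).card =
            Set.ncard {j : Fin N | j ∉ B ∪ extSetOn X Finset.univ B ∧
              (∑ k, η k * X j k) ≠ 0} := by
          rw [hset, Set.ncard_coe_finset]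
        rw [hcard]
        have hbdd : BddAbove {m : ℕ | ∃ B ∈ 𝔅', m = Set.ncard
            {j : Fin N | j ∉ B ∪ extSetOn X Finset.univ B ∧
              (∑ k, η k * X j k) ≠ 0}} := by
          refine ⟨N, fun m hm => ?_⟩
          obtain ⟨B', _, rfl⟩ := hm
          calc Set.ncard _ ≤ Set.ncard (Set.univ : Set (Fin N)) :=
                Set.ncard_le_ncard (Set.subset_univ _) Set.finite_univ
            _ = N := by rw [Set.ncard_univ, Nat.card_eq_fintype_card, Fintype.card_fin]
        have hmem : Set.ncard {j : Fin N | j ∉ B ∪ extSetOn X Finset.univ B ∧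
            (∑ k, η k * X j k) ≠ 0} ∈ {m : ℕ | ∃ B ∈ 𝔅', m = Set.ncard
            {j : Fin N | j ∉ B ∪ extSetOn X Finset.univ B ∧
              (∑ k, η k * X j k) ≠ 0}} := ⟨B, hB, rfl⟩
        have hle : Set.ncard {j : Fin N | j ∉ B ∪ extSetOn X Finset.univ B ∧
            (∑ k, η k * X j k) ≠ 0} ≤ κ := le_csSup hbdd hmem
        omega
      rw [hvanish, pairing_zero]
  intro q hq
  have := H q hq 1
  rwa [one_mul] at this

end
end

section
/- Let M be a matroid of rank r on a finite linearly ordered ground set A with set of bases 𝔅, and let 𝔅' ⊆ 𝔅 be nonempty with the forward exchange property. Then 𝔅' is placible. -/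
/-- `x` is placeable in a collection `𝔅` of bases. -/
def placeableS {α : Type*} (x : α) (𝔅 : Set (Set α)) : Prop :=
  ∀ B ∈ 𝔅, ∃ b ∈ B, insert x (B \ {b}) ∈ 𝔅

/-- Placibility, defined by recursion on cardinality: a singleton is placible;
otherwise some element `x` of the ground set is placeable in `𝔅`, with both the
restriction `𝔅_{|x}` and the deletion `𝔅_{∖x}` nonempty and placible. -/
inductive PlacibleS {α : Type*} (ground : Set α) : Set (Set α) → Prop where
  | singleton (B : Set α) : PlacibleS ground {B}
  | step (𝔅 : Set (Set α)) (x : α) (hx : x ∈ ground)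
      (hpl : placeableS x 𝔅)
      (h1 : {B ∈ 𝔅 | x ∈ B}.Nonempty) (h2 : {B ∈ 𝔅 | x ∉ B}.Nonempty)
      (p1 : PlacibleS ground {B ∈ 𝔅 | x ∈ B}) (p2 : PlacibleS ground {B ∈ 𝔅 | x ∉ B}) :
      PlacibleS ground 𝔅

/-- `x ∈ A ∖ B` is externally active with respect to `B`: `x ∈ cl {b ∈ B : b ≤ x}`. -/
def isExtActiveM {α : Type*} [LinearOrder α] (M : Matroid α) (B : Set α) (x : α) : Prop :=
  x ∈ M.E ∧ x ∉ B ∧ x ∈ M.closure {e ∈ B | e ≤ x}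

/-- The forward exchange property for a set `𝔅'` of bases of an ordered matroid:
for every `B ∈ 𝔅'`, every `b ∈ B`, and every `x ∈ S_i^B ∖ (S_{i-1}^B ∪ E(B))`
(where `b` is the `i`-th smallest element of `B`, so that
`S_i^B = cl {e ∈ B : e ≤ b}` and `S_{i-1}^B = cl {e ∈ B : e < b}`),
the set `(B ∖ {b}) ∪ {x}` belongs to `𝔅'`. -/
def forwardExchangeM {α : Type*} [LinearOrder α] (M : Matroid α) (𝔅 : Set (Set α)) : Prop :=
  ∀ B ∈ 𝔅, ∀ b ∈ B, ∀ x ∈ M.E,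
    x ∈ M.closure {e ∈ B | e ≤ b} →
    x ∉ M.closure {e ∈ B | e < b} →
    ¬ isExtActiveM M B x →
    insert x (B \ {b}) ∈ 𝔅

open Set
open scoped Matroid

/-- Placibility is monotone in the ground set. -/
lemma placibleS_mono {α : Type*} {E₁ E₂ : Set α} (h : E₁ ⊆ E₂) {𝔅 : Set (Set α)}
    (hp : PlacibleS E₁ 𝔅) : PlacibleS E₂ 𝔅 := by
  induction hp with
  | singleton B => exact .singleton B
  | step 𝔅 x hx hpl h1 h2 p1 p2 ih1 ih2 => exact .step 𝔅 x (h hx) hpl h1 h2 ih1 ih2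

/-- Membership in the closure of an independent set is unchanged by restriction. -/
lemma mem_restrict_closure_iff {α : Type*} {M : Matroid α} {R I : Set α} (hR : R ⊆ M.E)
    (hI : M.Indep I) (hIR : I ⊆ R) {y : α} (hy : y ∈ R) :
    y ∈ (M ↾ R).closure I ↔ y ∈ M.closure I := by
  have hI' : (M ↾ R).Indep I := Matroid.restrict_indep_iff.2 ⟨hI, hIR⟩
  rw [hI'.mem_closure_iff', hI.mem_closure_iff', Matroid.restrict_indep_iff]
  simp only [Matroid.restrict_ground_eq]
  constructor
  · rintro ⟨-, h⟩
    exact ⟨hR hy, fun hind => h ⟨hind, insert_subset hy hIR⟩⟩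
  · rintro ⟨-, h⟩
    exact ⟨hy, fun hind => h hind.1⟩

/-- The main induction: for any matroid with finite ground set, a nonempty family of
bases with the forward exchange property is placible. -/
lemma aux_forwardExchange_placible {α : Type*} [LinearOrder α] :
    ∀ (n : ℕ) (N : Matroid α) (𝔅 : Set (Set α)), N.E.Finite → 𝔅.ncard ≤ n → 𝔅.Nonempty →
      (∀ B ∈ 𝔅, N.IsBase B) → forwardExchangeM N 𝔅 → PlacibleS N.E 𝔅 := by
  intro n
  induction n with
  | zero =>
    intro N 𝔅 hfin hcard hne hsub _
    have hBfin : 𝔅.Finite :=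
      hfin.finite_subsets.subset (fun B hB => (hsub B hB).subset_ground)
    have := (Set.ncard_pos hBfin).2 hne
    omega
  | succ n ih =>
    intro N 𝔅 hfin hcard hne hsub hfe
    have hBfin : 𝔅.Finite :=
      hfin.finite_subsets.subset (fun B hB => (hsub B hB).subset_ground)
    by_cases htriv : ∀ B₁ ∈ 𝔅, ∀ B₂ ∈ 𝔅, B₁ = B₂
    · obtain ⟨B, hB⟩ := hne
      have : 𝔅 = {B} := Set.eq_singleton_iff_unique_mem.2
        ⟨hB, fun B' hB' => htriv B' hB' B hB⟩
      rw [this]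
      exact .singleton B
    · push_neg at htriv
      obtain ⟨B₁, hB₁, B₂, hB₂, hne12⟩ := htriv
      -- the set of elements lying in some but not every member of 𝔅
      set D : Set α := {a | (∃ B ∈ 𝔅, a ∈ B) ∧ ∃ B ∈ 𝔅, a ∉ B} with hD
      have hDne : D.Nonempty := by
        by_cases h12 : B₁ ⊆ B₂
        · obtain ⟨a, ha2, ha1⟩ := Set.not_subset.1 (fun h => hne12 (h12.antisymm h))
          exact ⟨a, ⟨B₂, hB₂, ha2⟩, ⟨B₁, hB₁, ha1⟩⟩
        · obtain ⟨a, ha1, ha2⟩ := Set.not_subset.1 h12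
          exact ⟨a, ⟨B₁, hB₁, ha1⟩, ⟨B₂, hB₂, ha2⟩⟩
      have hDsub : D ⊆ N.E := by
        rintro a ⟨⟨B, hB, haB⟩, -⟩
        exact (hsub B hB).subset_ground haB
      obtain ⟨x, hxD, hxmin⟩ := Set.exists_min_image D id (hfin.subset hDsub) hDne
      have hxE : x ∈ N.E := hDsub hxD
      -- elements below x lie in all members of 𝔅 or in none
      have key : ∀ a, a < x → ∀ B ∈ 𝔅, a ∈ B → ∀ B' ∈ 𝔅, a ∈ B' := by
        intro a ha B hB haB B' hB'
        by_contra haB'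
        exact absurd (hxmin a ⟨⟨B, hB, haB⟩, ⟨B', hB', haB'⟩⟩) (not_le.2 ha)
      obtain ⟨B', hB'𝔅, hxB'⟩ := hxD.1
      have hB'ind := (hsub B' hB'𝔅).indep
      have hxnotdiff : x ∉ N.closure (B' \ {x}) :=
        hB'ind.notMem_closure_sdiff_of_mem hxB'
      -- x is placeable in 𝔅
      have hplace : placeableS x 𝔅 := by
        intro B hB
        by_cases hxB : x ∈ B
        · refine ⟨x, hxB, ?_⟩
          rwa [Set.insert_diff_singleton, Set.insert_eq_of_mem hxB]
        · have hBbase := hsub B hB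
          have hBsub := hBbase.subset_ground
          have hBfin' : B.Finite := hfin.subset hBsub
          have hxclB : x ∈ N.closure B := by rw [hBbase.closure_eq]; exact hxE
          have hnotloop : x ∉ N.closure (∅ : Set α) := fun h =>
            hxnotdiff (N.closure_subset_closure (Set.empty_subset _) h)
          have hBne : B.Nonempty := by
            rcases Set.eq_empty_or_nonempty B with rfl | h
            · exact absurd hxclB hnotloop
            · exact h
          set T : Set α := {b ∈ B | x ∈ N.closure {e ∈ B | e ≤ b}} with hT
          have hTne : T.Nonempty := by
            obtain ⟨bm, hbm, hbmax⟩ := Set.exists_max_image B id hBfin' hBne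
            refine ⟨bm, hbm, ?_⟩
            have : {e ∈ B | e ≤ bm} = B :=
              Set.ext fun e => ⟨fun h => h.1, fun h => ⟨h, hbmax e h⟩⟩
            rwa [this]
          have hTsub : T ⊆ B := fun b hb => hb.1
          obtain ⟨b, hbT, hbmin⟩ :=
            Set.exists_min_image T id (hBfin'.subset hTsub) hTne
          have hlt : x ∉ N.closure {e ∈ B | e < b} := by
            intro hx'
            set S : Set α := {e ∈ B | e < b} with hS
            rcases Set.eq_empty_or_nonempty S with hSe | hSne
            · rw [hSe] at hx'; exact hnotloop hx'
            · obtain ⟨b'', hb''S, hb''max⟩ :=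
                Set.exists_max_image S id (hBfin'.subset (fun e he => he.1)) hSne
              have heq : {e ∈ B | e ≤ b''} = S := Set.ext fun e =>
                ⟨fun h => ⟨h.1, lt_of_le_of_lt h.2 hb''S.2⟩,
                 fun h => ⟨h.1, hb''max e h⟩⟩
              have hb''T : b'' ∈ T := ⟨hb''S.1, by rwa [heq]⟩
              exact absurd (hbmin b'' hb''T) (not_le.2 hb''S.2)
          have hact : ¬ isExtActiveM N B x := by
            rintro ⟨-, -, hxcl⟩
            have hsub' : {e ∈ B | e ≤ x} ⊆ B' \ {x} := by
              rintro e ⟨heB, hle⟩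
              have helt : e < x := lt_of_le_of_ne hle (by rintro rfl; exact hxB heB)
              exact ⟨key e helt B hB heB B' hB'𝔅, fun h => helt.ne (by simpa using h)⟩
            exact hxnotdiff (N.closure_subset_closure hsub' hxcl)
          exact ⟨b, hbT.1, hfe B hB b hbT.1 x hxE hbT.2 hlt hact⟩
      -- the two subfamilies
      obtain ⟨B'', hB''𝔅, hxB''⟩ := hxD.2
      have hne1 : {B ∈ 𝔅 | x ∈ B}.Nonempty := ⟨B', hB'𝔅, hxB'⟩
      have hne2 : {B ∈ 𝔅 | x ∉ B}.Nonempty := ⟨B'', hB''𝔅, hxB''⟩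
      have hcard1 : {B ∈ 𝔅 | x ∈ B}.ncard ≤ n := by
        have : {B ∈ 𝔅 | x ∈ B} ⊂ 𝔅 :=
          ⟨fun B hB => hB.1, fun h => hxB'' (h hB''𝔅).2⟩
        have := Set.ncard_lt_ncard this hBfin
        omega
      have hcard2 : {B ∈ 𝔅 | x ∉ B}.ncard ≤ n := by
        have : {B ∈ 𝔅 | x ∉ B} ⊂ 𝔅 :=
          ⟨fun B hB => hB.1, fun h => (h hB'𝔅).2 hxB'⟩
        have := Set.ncard_lt_ncard this hBfin
        omega
      -- the restriction 𝔅|x has the forward exchange property w.r.t. N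
      have hfe1 : forwardExchangeM N {B ∈ 𝔅 | x ∈ B} := by
        rintro B ⟨hB𝔅, hxB⟩ b hb y hy h1 h2 h3
        have hmem := hfe B hB𝔅 b hb y hy h1 h2 h3
        refine ⟨hmem, ?_⟩
        by_cases hbx : b = x
        · subst hbx
          by_cases hyx : y = b
          · subst hyx; exact Set.mem_insert _ _
          · exfalso
            have hBind := (hsub B hB𝔅).indep
            by_cases hyB : y ∈ B
            · rcases lt_or_ge y b with hylt | hyge
              · exact h2 (N.subset_closure {e ∈ B | e < b}
                  (fun e he => hBind.subset_ground he.1) ⟨hyB, hylt⟩)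
              · have hsub' : {e ∈ B | e ≤ b} ⊆ B \ {y} := by
                  rintro e ⟨heB, hle⟩
                  refine ⟨heB, fun h => ?_⟩
                  rw [Set.mem_singleton_iff] at h
                  subst h
                  exact hyx (le_antisymm hle hyge)
                exact hBind.notMem_closure_sdiff_of_mem hyB
                  (N.closure_subset_closure hsub' h1)
            · rcases lt_trichotomy y b with hylt | heq | hygt
              · exact absurd (hxmin y ⟨⟨_, hmem, Set.mem_insert _ _⟩, ⟨B, hB𝔅, hyB⟩⟩)
                  (not_le.2 hylt)
              · exact hyx heq
              · refine h3 ⟨hy, hyB, N.closure_subset_closure ?_ h1⟩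
                rintro e ⟨heB, hle⟩
                exact ⟨heB, hle.trans hygt.le⟩
        · refine Set.mem_insert_of_mem _ ⟨hxB, fun h => ?_⟩
          rw [Set.mem_singleton_iff] at h
          exact hbx h.symm
      have p1 : PlacibleS N.E {B ∈ 𝔅 | x ∈ B} :=
        ih N {B ∈ 𝔅 | x ∈ B} hfin hcard1 hne1 (fun B hB => hsub B hB.1) hfe1
      -- the deletion 𝔅∖x is a family of bases of N restricted to N.E \ {x}
      set R : Set α := N.E \ {x} with hR
      have hRsub : R ⊆ N.E := Set.diff_subset
      have hsub2 : ∀ B ∈ {B ∈ 𝔅 | x ∉ B}, (N ↾ R).IsBase B := by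
        rintro B ⟨hB𝔅, hxB⟩
        have hBsub : B ⊆ R := fun e he =>
          ⟨(hsub B hB𝔅).subset_ground he, fun h => hxB ((by simpa using h) ▸ he)⟩
        exact ((hsub B hB𝔅).isBasis_ground.isBasis_subset hBsub hRsub).restrict_isBase
      have hfe2 : forwardExchangeM (N ↾ R) {B ∈ 𝔅 | x ∉ B} := by
        rintro B ⟨hB𝔅, hxB⟩ b hb y hy h1 h2 h3
        have hyR : y ∈ R := hy
        have hBind := (hsub B hB𝔅).indep
        have hBsub : B ⊆ R := fun e he =>
          ⟨hBind.subset_ground he, fun h => hxB ((by simpa using h) ▸ he)⟩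
        have h1' : y ∈ N.closure {e ∈ B | e ≤ b} :=
          (mem_restrict_closure_iff hRsub (hBind.subset (fun e he => he.1))
            ((fun e (he : e ∈ B ∧ e ≤ b) => hBsub he.1)) hyR).1 h1
        have h2' : y ∉ N.closure {e ∈ B | e < b} := fun h =>
          h2 ((mem_restrict_closure_iff hRsub (hBind.subset (fun e he => he.1))
            ((fun e (he : e ∈ B ∧ e < b) => hBsub he.1)) hyR).2 h)
        have h3' : ¬ isExtActiveM N B y := by
          rintro ⟨-, hyB, hycl⟩
          exact h3 ⟨hy, hyB, (mem_restrict_closure_iff hRsub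
            (hBind.subset (fun e he => he.1))
            ((fun e (he : e ∈ B ∧ e ≤ y) => hBsub he.1)) hyR).2 hycl⟩
        have hmem := hfe B hB𝔅 b hb y (hRsub hyR) h1' h2' h3'
        refine ⟨hmem, ?_⟩
        rintro (h | ⟨h, -⟩)
        · exact hyR.2 h.symm
        · exact hxB h
      have p2 : PlacibleS N.E {B ∈ 𝔅 | x ∉ B} :=
        placibleS_mono hRsub
          (ih (N ↾ R) {B ∈ 𝔅 | x ∉ B} (hfin.subset hRsub) hcard2 hne2 hsub2 hfe2)
      exact .step 𝔅 x hxE hplace hne1 hne2 p1 p2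

/-- a nonempty set of bases of an ordered matroid (finite ground set,
rank `r`) with the forward exchange property is placible. -/
theorem statement16 {α : Type*} [LinearOrder α] (M : Matroid α) (hfin : M.E.Finite)
    (r : ℕ) (hr : ∀ B, M.IsBase B → B.ncard = r)
    (𝔅' : Set (Set α)) (hne : 𝔅'.Nonempty) (hsub : ∀ B ∈ 𝔅', M.IsBase B)
    (hfe : forwardExchangeM M 𝔅') :
    PlacibleS M.E 𝔅' := by
  exact aux_forwardExchange_placible 𝔅'.ncard M 𝔅' hfin le_rfl hne hsub hfe
end

section
/- Let A = (a_1,…,a_n) be an ordered list of vectors in ℝ^r and B_0 = (b_1,…,b_r) a basis of ℝ^r, and let X := (a_1,…,a_n,b_1,…,b_r) be the concatenation (all elements of A preceding those of B_0). For a linearly independent sublist I ⊆ A, define the greedy extension ex(I) by G_0 := I and, for j = 1,…,r, G_j := G_{j-1} ∪ {b_j} if b_j ∉ span(G_{j-1}), else G_j := G_{j-1}, and ex(I) := G_r. Then every ex(I) is a basis of ℝ^r, and the set of external bases 𝔅_+(A,B_0) := {ex(I) : I ⊆ A linearly independent} ⊆ 𝔅(X) has the forward exchange property (with respect to the order of X).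 -/
open Classical in
/-- The greedy extension process: `G_0 := I` (viewed inside `Fin (n+r)`), and
`G_j := G_{j-1} ∪ {b_j}` if `b_j ∉ span(G_{j-1})`, else `G_j := G_{j-1}`. -/
noncomputable def greedyExt {n r : ℕ} (A : Fin n → Fin r → ℝ) (B0 : Fin r → Fin r → ℝ)
    (I : Finset (Fin n)) : ℕ → Finset (Fin (n + r))
  | 0 => I.map (Fin.castAddEmb r)
  | j + 1 =>
    if hj : j < r then
      if Fin.append A B0 (Fin.natAdd n ⟨j, hj⟩) ∉
          Submodule.span ℝ (Fin.append A B0 ''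
            ((greedyExt A B0 I j : Finset (Fin (n + r))) : Set (Fin (n + r)))) then
        insert (Fin.natAdd n ⟨j, hj⟩) (greedyExt A B0 I j)
      else greedyExt A B0 I j
    else greedyExt A B0 I j

namespace S18
open Submodule
section G


variable {n r : ℕ} (A : Fin n → Fin r → ℝ) (B0 : Fin r → Fin r → ℝ) (I : Finset (Fin n))

lemma gE_subset_succ (k : ℕ) : greedyExt A B0 I k ⊆ greedyExt A B0 I (k + 1) := by
  rw [greedyExt]
  split_ifs <;> intro x hx <;>
    first
      | exact hx
      | exact Finset.mem_insert_of_mem hx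

lemma gE_mono {k m : ℕ} (h : k ≤ m) : greedyExt A B0 I k ⊆ greedyExt A B0 I m := by
  induction m with
  | zero => simp [Nat.le_zero.mp h]
  | succ m ih =>
    rcases Nat.lt_or_ge k (m+1) with h' | h'
    · exact (ih (Nat.lt_succ_iff.mp h')).trans (gE_subset_succ A B0 I m)
    · have : k = m + 1 := le_antisymm h h'
      subst this; exact Finset.Subset.refl _

lemma gE_val_lt (k : ℕ) : ∀ e ∈ greedyExt A B0 I k, (e : ℕ) < n + k := by
  induction k with
  | zero =>
    intro e he
    rw [greedyExt] at he
    obtain ⟨i, _, rfl⟩ := Finset.mem_map.mp he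
    simp
  | succ k ih =>
    intro e he
    rw [greedyExt] at he
    split_ifs at he
    case pos => exact Nat.lt_succ_of_lt (ih e he)
    case neg =>
      rcases Finset.mem_insert.mp he with rfl | he
      · simp
      · exact Nat.lt_succ_of_lt (ih e he)
    case neg => exact Nat.lt_succ_of_lt (ih e he)

/-- the part of `B` below position `n + k` -/
def below {n r : ℕ} (B : Finset (Fin (n + r))) (k : ℕ) : Finset (Fin (n + r)) :=
  B.filter (fun e => (e : ℕ) < n + k)

lemma gE_below {k m : ℕ} (h : k ≤ m) :
    below (greedyExt A B0 I m) k = greedyExt A B0 I k := by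
  induction m with
  | zero =>
    have hk : k = 0 := Nat.le_zero.mp h
    subst hk
    exact Finset.filter_eq_self.mpr (gE_val_lt A B0 I 0)
  | succ m ih =>
    rcases Nat.lt_or_ge k (m+1) with h' | h'
    · have hkm : k ≤ m := Nat.lt_succ_iff.mp h'
      rw [greedyExt]
      split_ifs
      case pos => exact ih hkm
      case neg =>
        rw [below, Finset.filter_insert, if_neg (by simp; omega)]
        exact ih hkm
      case neg => exact ih hkm
    · have : k = m + 1 := le_antisymm h h'
      subst this
      exact Finset.filter_eq_self.mpr (gE_val_lt A B0 I (m+1))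

lemma gE_indep (hI : LinearIndependent ℝ ((I : Set (Fin n)).restrict A)) (k : ℕ) :
    LinearIndependent ℝ
      ((↑(greedyExt A B0 I k) : Set (Fin (n+r))).restrict (Fin.append A B0)) := by
  induction k with
  | zero =>
    rw [greedyExt, Finset.coe_map]
    have hinj : Set.InjOn (⇑(Fin.castAddEmb r)) (I : Set (Fin n)) :=
      (Fin.castAddEmb r).injective.injOn
    rw [← linearIndependent_equiv
      (Equiv.Set.imageOfInjOn (⇑(Fin.castAddEmb r)) (I : Set (Fin n)) hinj)]
    have : ((⇑(Fin.castAddEmb r) '' (I : Set (Fin n))).restrict (Fin.append A B0)) ∘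
        (Equiv.Set.imageOfInjOn (⇑(Fin.castAddEmb r)) (I : Set (Fin n)) hinj)
        = (I : Set (Fin n)).restrict A := by
      funext i
      exact Fin.append_left A B0 ↑i
    rw [this]
    exact hI
  | succ k ih =>
    by_cases h1 : k < r
    · by_cases h2 : Fin.append A B0 (Fin.natAdd n ⟨k, h1⟩) ∉
          Submodule.span ℝ (Fin.append A B0 ''
            (↑(greedyExt A B0 I k) : Set (Fin (n+r))))
      · rw [greedyExt, dif_pos h1, if_pos h2, Finset.coe_insert]
        have hnm : Fin.natAdd n ⟨k, h1⟩ ∉ (↑(greedyExt A B0 I k) : Set (Fin (n+r))) := by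
          intro hmem
          have := gE_val_lt A B0 I k _ hmem
          simp at this
        exact (linearIndepOn_insert hnm).mpr ⟨ih, h2⟩
      · rw [greedyExt, dif_pos h1, if_neg h2]
        exact ih
    · rw [greedyExt, dif_neg h1]
      exact ih

lemma gE_span (hB0span : Submodule.span ℝ (Set.range B0) = ⊤) :
    Submodule.span ℝ (Fin.append A B0 '' (↑(greedyExt A B0 I r) : Set (Fin (n+r)))) = ⊤ := by
  have key : ∀ m : Fin r, Fin.append A B0 (Fin.natAdd n m) ∈
      Submodule.span ℝ (Fin.append A B0 '' (↑(greedyExt A B0 I r) : Set (Fin (n+r)))) := by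
    intro m
    have hmr : (m : ℕ) < r := m.isLt
    have hmono : greedyExt A B0 I ((m : ℕ) + 1) ⊆ greedyExt A B0 I r :=
      gE_mono A B0 I hmr
    have hmono' : greedyExt A B0 I (m : ℕ) ⊆ greedyExt A B0 I r :=
      gE_mono A B0 I hmr.le
    by_cases h2 : Fin.append A B0 (Fin.natAdd n ⟨(m : ℕ), hmr⟩) ∈
        Submodule.span ℝ (Fin.append A B0 ''
          (↑(greedyExt A B0 I (m : ℕ)) : Set (Fin (n+r))))
    · have : Fin.natAdd n ⟨(m : ℕ), hmr⟩ = Fin.natAdd n m := by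
        apply Fin.ext; simp
      rw [← this]
      exact span_le.mpr (Set.image_subset_iff.mpr (fun e he =>
        Set.mem_preimage.mpr (subset_span (Set.mem_image_of_mem _ (hmono' he))))) h2
    · have hmem : Fin.natAdd n ⟨(m : ℕ), hmr⟩ ∈ greedyExt A B0 I ((m : ℕ) + 1) := by
        rw [greedyExt, dif_pos hmr, if_pos h2]
        exact Finset.mem_insert_self _ _
      have : Fin.natAdd n ⟨(m : ℕ), hmr⟩ = Fin.natAdd n m := by
        apply Fin.ext; simp
      rw [← this]
      exact subset_span (Set.mem_image_of_mem _ (hmono hmem))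
  rw [eq_top_iff, ← hB0span]
  apply span_le.mpr
  rintro v ⟨m, rfl⟩
  rw [← Fin.append_right A B0 m]
  exact key m

lemma gE_extProp (k : Fin r) :
    Fin.natAdd n k ∈ greedyExt A B0 I r ↔
      Fin.append A B0 (Fin.natAdd n k) ∉
        Submodule.span ℝ (Fin.append A B0 ''
          (↑(below (greedyExt A B0 I r) (k : ℕ)) : Set (Fin (n+r)))) := by
  rw [gE_below A B0 I (le_of_lt k.isLt)]
  set cond := Fin.append A B0 (Fin.natAdd n k) ∉
    Submodule.span ℝ (Fin.append A B0 ''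
      (↑(greedyExt A B0 I (k : ℕ)) : Set (Fin (n+r)))) with hcond
  constructor
  · intro hmem
    by_contra hnc
    -- show natAdd k never enters
    have : ∀ m, Fin.natAdd n k ∉ greedyExt A B0 I m := by
      intro m
      induction m with
      | zero =>
        intro hm
        have := gE_val_lt A B0 I 0 _ hm
        simp at this
      | succ m ih =>
        rw [greedyExt]
        split_ifs with h1 h2
        · exact ih
        · intro hm
          rcases Finset.mem_insert.mp hm with heq | hm'
          · -- then m = k and the condition h2 contradicts hnc
            have hv : m = (k : ℕ) := by
              have := congrArg Fin.val heq
              simp at this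
              omega
            subst hv
            have heqf : Fin.natAdd n ⟨(k : ℕ), h1⟩ = Fin.natAdd n k := by
              apply Fin.ext; simp
            rw [heqf] at h2
            exact h2 hnc
          · exact ih hm'
        · exact ih
    exact this r hmem
  · intro hc
    have hkr : (k : ℕ) < r := k.isLt
    have hmem : Fin.natAdd n k ∈ greedyExt A B0 I ((k : ℕ) + 1) := by
      rw [greedyExt, dif_pos hkr]
      have heq : Fin.natAdd n ⟨(k : ℕ), hkr⟩ = Fin.natAdd n k := by
        apply Fin.ext; simp
      rw [heq, if_pos hc]
      exact Finset.mem_insert_self _ _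
    exact gE_mono A B0 I hkr hmem


end G
section Ap

def apart {n r : ℕ} (B : Finset (Fin (n + r))) : Finset (Fin n) :=
  Finset.univ.filter (fun i => Fin.castAdd r i ∈ B)

variable {n r : ℕ} (A : Fin n → Fin r → ℝ) (B0 : Fin r → Fin r → ℝ)

lemma apart_map (B : Finset (Fin (n + r))) :
    (apart B).map (Fin.castAddEmb r) = below B 0 := by
  ext e
  simp only [Finset.mem_map, apart, below, Finset.mem_filter, Finset.mem_univ, true_and]
  constructor
  · rintro ⟨i, hi, rfl⟩
    constructor
    · simpa using hi
    · simp
  · rintro ⟨he, hlt⟩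
    have hn : (e : ℕ) < n := by simpa using hlt
    have heq : (Fin.castAddEmb r) ⟨(e : ℕ), hn⟩ = e := by
      apply Fin.ext; simp
    refine ⟨⟨(e : ℕ), hn⟩, ?_, heq⟩
    have : Fin.castAdd r ⟨(e : ℕ), hn⟩ = e := by apply Fin.ext; simp
    rw [this]; exact he

lemma apart_indep (B : Finset (Fin (n + r)))
    (hB : LinearIndependent ℝ ((↑B : Set (Fin (n + r))).restrict (Fin.append A B0))) :
    LinearIndependent ℝ ((↑(apart B) : Set (Fin n)).restrict A) := by
  have hcomp : ∀ i : (↑(apart B) : Set (Fin n)), Fin.castAdd r (i : Fin n) ∈ B := by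
    intro i
    have := i.2
    simp only [Finset.coe_filter, apart, Set.mem_setOf_eq, Finset.mem_univ, true_and,
      Finset.mem_coe] at this
    exact this
  have hg : Function.Injective
      (fun i : (↑(apart B) : Set (Fin n)) =>
        (⟨Fin.castAdd r (i : Fin n), hcomp i⟩ : (↑B : Set (Fin (n + r))))) := by
    intro a b hab
    apply Subtype.ext
    apply Fin.ext
    have := congrArg Fin.val (congrArg Subtype.val hab)
    simpa using this
  have hLI := hB.comp _ hg
  have heq : ((↑B : Set (Fin (n + r))).restrict (Fin.append A B0)) ∘
      (fun i : (↑(apart B) : Set (Fin n)) =>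
        (⟨Fin.castAdd r (i : Fin n), hcomp i⟩ : (↑B : Set (Fin (n + r)))))
      = (↑(apart B) : Set (Fin n)).restrict A := by
    funext i
    exact Fin.append_left A B0 (i : Fin n)
  rw [heq] at hLI
  exact hLI


end Ap
section Rec




variable {n r : ℕ} (A : Fin n → Fin r → ℝ) (B0 : Fin r → Fin r → ℝ)


lemma reconstruct (B : Finset (Fin (n + r)))
    (hext : ∀ k : Fin r, Fin.natAdd n k ∈ B ↔
      Fin.append A B0 (Fin.natAdd n k) ∉
        Submodule.span ℝ (Fin.append A B0 '' (↑(below B (k : ℕ)) : Set (Fin (n + r))))) :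
    greedyExt A B0 (apart B) r = B := by
  have main : ∀ k, k ≤ r → greedyExt A B0 (apart B) k = below B k := by
    intro k hk
    induction k with
    | zero => rw [greedyExt]; exact apart_map B
    | succ k ih =>
      have hkr : k < r := hk
      have ihk := ih hkr.le
      rw [greedyExt, dif_pos hkr, ihk]
      have hcond := hext ⟨k, hkr⟩
      by_cases h2 : Fin.append A B0 (Fin.natAdd n ⟨k, hkr⟩) ∉
          Submodule.span ℝ (Fin.append A B0 '' (↑(below B k) : Set (Fin (n + r))))
      · rw [if_pos h2]
        have hmem : Fin.natAdd n ⟨k, hkr⟩ ∈ B := hcond.mpr h2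
        ext e
        simp only [Finset.mem_insert, below, Finset.mem_filter]
        constructor
        · rintro (rfl | ⟨heB, hlt⟩)
          · exact ⟨hmem, by simp⟩
          · exact ⟨heB, by omega⟩
        · rintro ⟨heB, hlt⟩
          by_cases hv : (e : ℕ) < n + k
          · right; exact ⟨heB, hv⟩
          · left; apply Fin.ext; simp; omega
      · rw [if_neg h2]
        have hmem : Fin.natAdd n ⟨k, hkr⟩ ∉ B := fun hm => h2 (hcond.mp hm)
        ext e
        simp only [below, Finset.mem_filter]
        constructor
        · rintro ⟨heB, hlt⟩; exact ⟨heB, by omega⟩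
        · rintro ⟨heB, hlt⟩
          refine ⟨heB, ?_⟩
          by_contra hv
          have heq : e = Fin.natAdd n ⟨k, hkr⟩ := by apply Fin.ext; simp; omega
          exact hmem (heq ▸ heB)
  have hmr := main r le_rfl
  rw [hmr]
  exact Finset.filter_eq_self.mpr (fun e _ => e.isLt)


end Rec
section Ex



variable {n r : ℕ} (X : Fin (n + r) → Fin r → ℝ)

section Exchange

variable {B : Finset (Fin (n + r))} {b j : Fin (n + r)}
  (hb : b ∈ B) (hjB : j ∉ B) (hjb : j < b)
  (h1 : X j ∈ span ℝ (X '' {e | e ∈ B ∧ e ≤ b}))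
  (h2 : X j ∉ span ℝ (X '' {e | e ∈ B ∧ e < b}))
  (h3 : X j ∉ span ℝ (X '' {e | e ∈ B ∧ e ≤ j}))

include hb h1 h2 in
lemma exch_Xb : X b ∈ span ℝ (insert (X j) (X '' {e | e ∈ B ∧ e < b})) := by
  have hseteq : {e | e ∈ B ∧ e ≤ b} = insert b {e : Fin (n + r) | e ∈ B ∧ e < b} := by
    ext e
    simp only [Set.mem_setOf_eq, Set.mem_insert_iff]
    constructor
    · rintro ⟨heB, hle⟩
      rcases lt_or_eq_of_le hle with hlt | heq
      · exact Or.inr ⟨heB, hlt⟩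
      · exact Or.inl heq
    · rintro (rfl | ⟨heB, hlt⟩)
      · exact ⟨hb, le_refl _⟩
      · exact ⟨heB, le_of_lt hlt⟩
  rw [hseteq, Set.image_insert_eq] at h1
  exact mem_span_insert_exchange h1 h2

include hb hjB hjb h1 h2 in
lemma exch_span (hBs : span ℝ (X '' (↑B : Set (Fin (n + r)))) = ⊤) :
    span ℝ (X '' (↑(insert j (B.erase b)) : Set (Fin (n + r)))) = ⊤ := by
  have hXb := exch_Xb X hb h1 h2
  rw [eq_top_iff, ← hBs]
  apply span_le.mpr
  rintro v ⟨e, heB, rfl⟩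
  by_cases hev : e = b
  · rw [show e = b from hev]
    have hsub : insert (X j) (X '' {e | e ∈ B ∧ e < b}) ⊆
        X '' (↑(insert j (B.erase b)) : Set (Fin (n + r))) := by
      rintro v (rfl | ⟨e, ⟨heB', helt⟩, rfl⟩)
      · exact Set.mem_image_of_mem _ (by simp)
      · exact Set.mem_image_of_mem _ (by
          simp only [Finset.coe_insert, Set.mem_insert_iff, Finset.mem_coe, Finset.mem_erase]
          exact Or.inr ⟨ne_of_lt helt, heB'⟩)
    exact span_mono hsub hXb
  · apply subset_span
    apply Set.mem_image_of_mem
    simp only [Finset.coe_insert, Set.mem_insert_iff, Finset.mem_coe, Finset.mem_erase]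
    exact Or.inr ⟨hev, heB⟩

include hb hjB hjb h1 h2 h3 in
lemma exch_ext
    (hext : ∀ k : Fin r, Fin.natAdd n k ∈ B ↔
      X (Fin.natAdd n k) ∉ span ℝ (X '' (↑(below B (k : ℕ)) : Set (Fin (n + r)))))
    (k : Fin r) :
    Fin.natAdd n k ∈ insert j (B.erase b) ↔
      X (Fin.natAdd n k) ∉
        span ℝ (X '' (↑(below (insert j (B.erase b)) (k : ℕ)) : Set (Fin (n + r)))) := by
  have hXb := exch_Xb X hb h1 h2
  have hjvb : (j : ℕ) < (b : ℕ) := hjb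
  set t := Fin.natAdd n k with ht
  have htv : (t : ℕ) = n + (k : ℕ) := rfl
  by_cases hc1 : n + (k : ℕ) ≤ (j : ℕ)
  · -- case iv
    have hBB' : below (insert j (B.erase b)) (k : ℕ) = below B (k : ℕ) := by
      ext e
      simp only [below, Finset.mem_filter, Finset.mem_insert, Finset.mem_erase]
      constructor
      · rintro ⟨rfl | ⟨hne, heB⟩, hlt⟩
        · omega
        · exact ⟨heB, hlt⟩
      · rintro ⟨heB, hlt⟩
        refine ⟨Or.inr ⟨?_, heB⟩, hlt⟩
        intro heq
        rw [heq] at hlt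
        omega
    rw [hBB']
    by_cases htj : t = j
    · apply iff_of_true
      · rw [htj]; exact Finset.mem_insert_self _ _
      · rw [htj]
        intro hin
        apply h3
        refine span_mono (Set.image_mono ?_) hin
        intro e he
        rw [Finset.mem_coe, below, Finset.mem_filter] at he
        exact ⟨he.1, by rw [Fin.le_def]; omega⟩
    · have htb : t ≠ b := by
        intro heq
        apply htj
        have : (t : ℕ) = (b : ℕ) := by rw [heq]
        omega
      have hmem : t ∈ insert j (B.erase b) ↔ t ∈ B := by
        simp only [Finset.mem_insert, Finset.mem_erase]
        constructor
        · rintro (rfl | ⟨_, hB'⟩)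
          · exact absurd rfl htj
          · exact hB'
        · intro hB'; exact Or.inr ⟨htb, hB'⟩
      rw [hmem]
      exact hext k
  · push_neg at hc1
    by_cases hc2 : (b : ℕ) < n + (k : ℕ)
    · -- case i : b below the threshold
      have htj : t ≠ j := fun heq => by rw [heq] at htv; omega
      have htb : t ≠ b := fun heq => by rw [heq] at htv; omega
      have hspan : span ℝ (X '' (↑(below (insert j (B.erase b)) (k : ℕ)) : Set (Fin (n + r))))
          = span ℝ (X '' (↑(below B (k : ℕ)) : Set (Fin (n + r)))) := by
        apply le_antisymm <;> apply span_le.mpr <;> rintro v ⟨e, he, rfl⟩ <;>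
          rw [Finset.mem_coe, below, Finset.mem_filter] at he
        · rcases Finset.mem_insert.mp he.1 with rfl | he'
          · refine span_mono (Set.image_mono ?_) h1
            intro x hx
            rw [Finset.mem_coe, below, Finset.mem_filter]
            refine ⟨hx.1, ?_⟩
            have := Fin.le_def.mp hx.2
            omega
          · apply subset_span
            apply Set.mem_image_of_mem
            rw [Finset.mem_coe, below, Finset.mem_filter]
            exact ⟨(Finset.mem_erase.mp he').2, he.2⟩
        · by_cases hev : e = b
          · rw [show e = b from hev]
            refine span_mono ?_ hXb
            rintro v (rfl | ⟨x, ⟨hxB, hxlt⟩, rfl⟩)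
            · apply Set.mem_image_of_mem
              rw [Finset.mem_coe, below, Finset.mem_filter]
              exact ⟨Finset.mem_insert_self _ _, by omega⟩
            · apply Set.mem_image_of_mem
              rw [Finset.mem_coe, below, Finset.mem_filter]
              have hxvb : (x : ℕ) < (b : ℕ) := hxlt
              exact ⟨Finset.mem_insert_of_mem (Finset.mem_erase.mpr ⟨ne_of_lt hxlt, hxB⟩),
                by omega⟩
          · apply subset_span
            apply Set.mem_image_of_mem
            rw [Finset.mem_coe, below, Finset.mem_filter]
            exact ⟨Finset.mem_insert_of_mem (Finset.mem_erase.mpr ⟨hev, he.1⟩), he.2⟩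
      rw [hspan]
      have hmem : t ∈ insert j (B.erase b) ↔ t ∈ B := by
        simp only [Finset.mem_insert, Finset.mem_erase]
        constructor
        · rintro (rfl | ⟨_, hB'⟩)
          · exact absurd rfl htj
          · exact hB'
        · intro hB'; exact Or.inr ⟨htb, hB'⟩
      rw [hmem]
      exact hext k
    · push_neg at hc2
      by_cases hc3 : t = b
      · -- case ii
        apply iff_of_false
        · rw [hc3]
          simp only [Finset.mem_insert, Finset.mem_erase]
          rintro (rfl | ⟨hne, _⟩)
          · omega
          · exact hne rfl
        · rw [not_not, hc3]
          have hkb : n + (k : ℕ) = (b : ℕ) := by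
            have := congrArg Fin.val hc3
            rw [← htv]; exact this
          refine span_mono ?_ hXb
          rintro v (rfl | ⟨x, ⟨hxB, hxlt⟩, rfl⟩)
          · apply Set.mem_image_of_mem
            rw [Finset.mem_coe, below, Finset.mem_filter]
            exact ⟨Finset.mem_insert_self _ _, by omega⟩
          · apply Set.mem_image_of_mem
            rw [Finset.mem_coe, below, Finset.mem_filter]
            have hxvb : (x : ℕ) < (b : ℕ) := hxlt
            exact ⟨Finset.mem_insert_of_mem (Finset.mem_erase.mpr ⟨ne_of_lt hxlt, hxB⟩),
              by omega⟩
      · -- case iii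
        have htvb : (t : ℕ) < (b : ℕ) := by
          rcases lt_or_eq_of_le hc2 with h | h
          · omega
          · exact absurd (Fin.ext (by omega) : t = b) hc3
        have htj : t ≠ j := fun heq => by rw [heq] at htv; omega
        have hBB' : below (insert j (B.erase b)) (k : ℕ) = insert j (below B (k : ℕ)) := by
          ext e
          simp only [below, Finset.mem_filter, Finset.mem_insert, Finset.mem_erase]
          constructor
          · rintro ⟨rfl | ⟨hne, heB⟩, hlt⟩
            · exact Or.inl rfl
            · exact Or.inr ⟨heB, hlt⟩
          · rintro (rfl | ⟨heB, hlt⟩)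
            · exact ⟨Or.inl rfl, by omega⟩
            · refine ⟨Or.inr ⟨?_, heB⟩, hlt⟩
              intro heq
              rw [heq] at hlt
              omega
        have hmem : t ∈ insert j (B.erase b) ↔ t ∈ B := by
          simp only [Finset.mem_insert, Finset.mem_erase]
          constructor
          · rintro (rfl | ⟨_, hB'⟩)
            · exact absurd rfl htj
            · exact hB'
          · intro hB'; exact Or.inr ⟨hc3, hB'⟩
        rw [hBB', hmem]
        constructor
        · intro htB hin
          have hnot : X t ∉ span ℝ (X '' (↑(below B (k : ℕ)) : Set (Fin (n + r)))) :=
            (hext k).mp htB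
          rw [Finset.coe_insert, Set.image_insert_eq] at hin
          have hXj : X j ∈ span ℝ (insert (X t)
              (X '' (↑(below B (k : ℕ)) : Set (Fin (n + r))))) :=
            mem_span_insert_exchange hin hnot
          apply h2
          refine span_mono ?_ hXj
          rintro v (rfl | ⟨x, hx, rfl⟩)
          · exact Set.mem_image_of_mem _ ⟨htB, by rw [Fin.lt_def]; omega⟩
          · rw [Finset.mem_coe, below, Finset.mem_filter] at hx
            exact Set.mem_image_of_mem _ ⟨hx.1, by rw [Fin.lt_def]; omega⟩
        · intro hnin
          by_contra htB
          apply hnin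
          have : X t ∈ span ℝ (X '' (↑(below B (k : ℕ)) : Set (Fin (n + r)))) :=
            not_not.mp (fun hh => htB ((hext k).mpr hh))
          refine span_mono (Set.image_mono ?_) this
          rw [Finset.coe_insert]
          exact Set.subset_insert _ _

include hb hjB hjb h1 h2 in
lemma exch_indep
    (hBi : LinearIndependent ℝ ((↑B : Set (Fin (n + r))).restrict X))
    (hBs : span ℝ (X '' (↑B : Set (Fin (n + r)))) = ⊤) :
    LinearIndependent ℝ ((↑(insert j (B.erase b)) : Set (Fin (n + r))).restrict X) := by
  have hBs' := exch_span X hb hjB hjb h1 h2 hBs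
  have hcardB : B.card = r := by
    have hbasis : Module.Basis (↑(↑B : Set (Fin (n + r)))) ℝ (Fin r → ℝ) :=
      Module.Basis.mk hBi (by rw [show Set.range ((↑B : Set (Fin (n + r))).restrict X) = X '' ↑B from (Set.image_eq_range _ _).symm, hBs])
    have hfr := Module.finrank_eq_card_basis hbasis
    rw [Module.finrank_fin_fun] at hfr
    simpa using hfr.symm
  have hrpos : 0 < r := by
    rw [← hcardB]
    exact Finset.card_pos.mpr ⟨b, hb⟩
  have hcard' : (insert j (B.erase b)).card = r := by
    rw [Finset.card_insert_of_notMem (fun h => hjB (Finset.mem_of_mem_erase h)),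
      Finset.card_erase_of_mem hb, hcardB]
    omega
  apply linearIndependent_of_top_le_span_of_card_eq_finrank
  · rw [show Set.range ((↑(insert j (B.erase b)) : Set (Fin (n + r))).restrict X) = X '' ↑(insert j (B.erase b)) from (Set.image_eq_range _ _).symm, hBs']
  · rw [Module.finrank_fin_fun]
    simp only [Finset.coe_sort_coe, Fintype.card_coe]
    exact hcard'

end Exchange


end Ex
end S18

/-- every greedy extension `ex(I) = G_r` of a linearly independent
sublist `I ⊆ A` is a basis of `ℝ^r` selected from `X = (A, B_0)`, and the set of
external bases `𝔅₊(A,B_0) = {ex(I)}` has the forward exchange property. -/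
theorem statement18 {n r : ℕ} (A : Fin n → Fin r → ℝ) (B0 : Fin r → Fin r → ℝ)
    (hB0indep : LinearIndependent ℝ B0)
    (hB0span : Submodule.span ℝ (Set.range B0) = ⊤) :
    (∀ I : Finset (Fin n), LinearIndependent ℝ ((I : Set (Fin n)).restrict A) →
      greedyExt A B0 I r ∈ basesOn (Fin.append A B0) Finset.univ) ∧
    forwardExchange (Fin.append A B0)
      {B | ∃ I : Finset (Fin n), LinearIndependent ℝ ((I : Set (Fin n)).restrict A) ∧
        B = greedyExt A B0 I r} := by
  constructor
  · intro I hI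
    exact ⟨Finset.subset_univ _, S18.gE_indep A B0 I hI r, S18.gE_span A B0 I hB0span⟩
  · intro B hB b hbB j hsp1 hsp2 hnact
    obtain ⟨I, hI, rfl⟩ := hB
    have hBi := S18.gE_indep A B0 I hI r
    have hBs := S18.gE_span A B0 I hB0span
    have hext := S18.gE_extProp A B0 I
    by_cases hjB : j ∈ greedyExt A B0 I r
    · rcases lt_trichotomy j b with hlt | heq | hgt
      · have hmem : j ∈ {e | e ∈ greedyExt A B0 I r ∧ e < b} := ⟨hjB, hlt⟩
        exact absurd (Submodule.subset_span (Set.mem_image_of_mem _ hmem)) hsp2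
      · rw [heq, Finset.insert_erase hbB]
        exact ⟨I, hI, rfl⟩
      · exfalso
        have hns := hBi.notMem_span_image
          (s := {e : (↑(greedyExt A B0 I r) : Set (Fin (n + r))) | (e : Fin (n + r)) ≤ b})
          (x := ⟨j, Finset.mem_coe.mpr hjB⟩)
          (fun h => absurd h (not_le_of_gt hgt))
        apply hns
        have himg : ((↑(greedyExt A B0 I r) : Set (Fin (n + r))).restrict (Fin.append A B0)) ''
            {e : (↑(greedyExt A B0 I r) : Set (Fin (n + r))) | (e : Fin (n + r)) ≤ b}
            = Fin.append A B0 '' {e | e ∈ greedyExt A B0 I r ∧ e ≤ b} := by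
          ext v
          constructor
          · rintro ⟨⟨e, heB⟩, hle, rfl⟩
            exact ⟨e, ⟨Finset.mem_coe.mp heB, hle⟩, rfl⟩
          · rintro ⟨e, ⟨heB, hle⟩, rfl⟩
            exact ⟨⟨e, Finset.mem_coe.mpr heB⟩, hle, rfl⟩
        rw [himg]
        exact hsp1
    · have h3 : Fin.append A B0 j ∉ Submodule.span ℝ
          (Fin.append A B0 '' {e | e ∈ greedyExt A B0 I r ∧ e ≤ j}) :=
        fun hin => hnact ⟨hjB, hin⟩
      have hjb : j < b := by
        by_contra hnb
        apply h3
        refine Submodule.span_mono (Set.image_mono ?_) hsp1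
        intro e he
        exact ⟨he.1, le_trans he.2 (le_of_not_gt hnb)⟩
      have hBi' := S18.exch_indep (Fin.append A B0) hbB hjB hjb hsp1 hsp2 hBi hBs
      have hext' := S18.exch_ext (Fin.append A B0) hbB hjB hjb hsp1 hsp2 h3 hext
      exact ⟨S18.apart (insert j ((greedyExt A B0 I r).erase b)),
        S18.apart_indep A B0 _ hBi',
        (S18.reconstruct A B0 _ hext').symm⟩
end

section
/- Let A be a finite ordered list of vectors spanning ℝ^r. For B ∈ 𝔅(A), an element b ∈ B is internally active in B if b is the maximum (with respect to the list order) of the set of elements of A not lying in span(B∖b). Then the set of internal bases 𝔅_-(A) := {B ∈ 𝔅(A) : no element of B is internally active in B} has the forward exchange property. -/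
/-- `b ∈ B` is internally active in `B`: `b` is the maximum element of the set of
elements of the list not lying in `span(B∖b)`. -/
def isIntActive {r N : ℕ} (A : Fin N → Fin r → ℝ) (B : Finset (Fin N)) (b : Fin N) : Prop :=
  b ∈ B ∧
    A b ∉ Submodule.span ℝ (A '' ((B.erase b : Finset (Fin N)) : Set (Fin N))) ∧
    ∀ j : Fin N,
      A j ∉ Submodule.span ℝ (A '' ((B.erase b : Finset (Fin N)) : Set (Fin N))) → j ≤ b


section Aux
variable {r N : ℕ} {A : Fin N → Fin r → ℝ} {B : Finset (Fin N)}

lemma restrict_image_eq (A : Fin N → Fin r → ℝ) (B : Finset (Fin N)) (b : Fin N) :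
    ((B : Set (Fin N)).restrict A) '' {e : (B : Set (Fin N)) | (e : Fin N) ≠ b}
      = A '' ((B.erase b : Finset (Fin N)) : Set (Fin N)) := by
  ext y
  constructor
  · rintro ⟨⟨x, hx⟩, hne, rfl⟩
    exact ⟨x, Finset.mem_coe.mpr (Finset.mem_erase.mpr ⟨hne, by simpa using hx⟩), rfl⟩
  · rintro ⟨x, hx, rfl⟩
    rw [Finset.coe_erase] at hx
    exact ⟨⟨x, hx.1⟩, hx.2, rfl⟩

lemma notMemSpanErase (hind : LinearIndependent ℝ ((B : Set (Fin N)).restrict A))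
    {b : Fin N} (hb : b ∈ B) :
    A b ∉ Submodule.span ℝ (A '' ((B.erase b : Finset (Fin N)) : Set (Fin N))) := by
  have h := hind.notMem_span_image (s := {e : (B : Set (Fin N)) | (e : Fin N) ≠ b})
    (x := ⟨b, by simpa using hb⟩) (by simp)
  rwa [restrict_image_eq] at h

/-- From non-internal-activity extract a witness. -/
lemma witness_of_not_intActive (hind : LinearIndependent ℝ ((B : Set (Fin N)).restrict A))
    {b : Fin N} (hb : b ∈ B) (hni : ¬ isIntActive A B b) :
    ∃ y : Fin N, A y ∉ Submodule.span ℝ (A '' ((B.erase b : Finset (Fin N)) : Set (Fin N)))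
      ∧ b < y := by
  unfold isIntActive at hni
  push_neg at hni
  obtain ⟨y, hy1, hy2⟩ := hni hb (notMemSpanErase hind hb)
  exact ⟨y, hy1, hy2⟩

end Aux

/-- the set of internal bases has the forward exchange property. -/
theorem statement19 {r N : ℕ} (A : Fin N → Fin r → ℝ)
    (hA : Submodule.span ℝ (Set.range A) = ⊤) :
    forwardExchange A
      {B ∈ basesOn A Finset.univ | ∀ b ∈ B, ¬ isIntActive A B b} := by
  rintro B ⟨hBbas, hBint⟩ b hb j hj1 hj2 hnea
  obtain ⟨-, hind, hspan⟩ := hBbas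
  by_cases hjb : j = b
  · subst hjb
    rw [Finset.insert_erase hb]
    exact ⟨⟨Finset.subset_univ B, hind, hspan⟩, hBint⟩
  have hjB : j ∉ B := by
    intro hjB
    rcases lt_trichotomy j b with h | h | h
    · exact hj2 (Submodule.subset_span ⟨j, ⟨hjB, h⟩, rfl⟩)
    · exact hjb h
    · apply notMemSpanErase hind hjB
      refine Submodule.span_mono ?_ hj1
      rintro y ⟨e, ⟨heB, heb⟩, rfl⟩
      exact ⟨e, Finset.mem_coe.mpr (Finset.mem_erase.mpr ⟨(heb.trans_lt h).ne, heB⟩), rfl⟩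
  have hjltb : j < b := by
    rcases lt_trichotomy j b with h | h | h
    · exact h
    · exact absurd h hjb
    · refine absurd ⟨hjB, Submodule.span_mono ?_ hj1⟩ hnea
      rintro y ⟨e, ⟨heB, heb⟩, rfl⟩
      exact ⟨e, ⟨heB, heb.trans h.le⟩, rfl⟩
  have hjBe : j ∉ B.erase b := fun h => hjB (Finset.mem_of_mem_erase h)
  set B' := insert j (B.erase b) with hB'def
  have hsetle : {e : Fin N | e ∈ B ∧ e ≤ b} = insert b {e : Fin N | e ∈ B ∧ e < b} := by
    ext e
    simp only [Set.mem_setOf_eq, Set.mem_insert_iff]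
    constructor
    · rintro ⟨h1, h2⟩
      rcases h2.lt_or_eq with h | h
      · exact Or.inr ⟨h1, h⟩
      · exact Or.inl h
    · rintro (rfl | ⟨h1, h2⟩)
      exacts [⟨hb, le_refl _⟩, ⟨h1, h2.le⟩]
  have hj1' : A j ∈ Submodule.span ℝ (insert (A b) (A '' {e : Fin N | e ∈ B ∧ e < b})) := by
    rwa [hsetle, Set.image_insert_eq] at hj1
  have hbmem : A b ∈ Submodule.span ℝ (insert (A j) (A '' {e : Fin N | e ∈ B ∧ e < b})) :=
    mem_span_insert_exchange hj1' hj2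
  have hltsub : {e : Fin N | e ∈ B ∧ e < b} ⊆ ((B.erase b : Finset (Fin N)) : Set (Fin N)) := by
    rintro e ⟨h1, h2⟩
    exact Finset.mem_coe.mpr (Finset.mem_erase.mpr ⟨h2.ne, h1⟩)
  have hB'img : A '' (B' : Set (Fin N))
      = insert (A j) (A '' ((B.erase b : Finset (Fin N)) : Set (Fin N))) := by
    rw [hB'def, Finset.coe_insert, Set.image_insert_eq]
  have hbmem' : A b ∈ Submodule.span ℝ (A '' (B' : Set (Fin N))) := by
    rw [hB'img]
    exact Submodule.span_mono (Set.insert_subset_insert (Set.image_mono hltsub)) hbmem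
  have hspan' : Submodule.span ℝ (A '' (B' : Set (Fin N))) = ⊤ := by
    rw [eq_top_iff, ← hspan]
    have hBsub : (B : Set (Fin N)) ⊆ insert b (B' : Set (Fin N)) := by
      intro e he
      by_cases heb : e = b
      · exact Or.inl heb
      · exact Or.inr (by
          rw [hB'def, Finset.coe_insert]
          exact Or.inr (Finset.mem_coe.mpr (Finset.mem_erase.mpr ⟨heb, he⟩)))
    calc Submodule.span ℝ (A '' (B : Set (Fin N)))
        ≤ Submodule.span ℝ (insert (A b) (A '' (B' : Set (Fin N)))) := by
          refine Submodule.span_mono ?_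
          rw [← Set.image_insert_eq]
          exact Set.image_mono hBsub
      _ = Submodule.span ℝ (A '' (B' : Set (Fin N))) := Submodule.span_insert_eq_span hbmem'
  have hBcard : B.card = r := by
    have hbasis : Module.Basis (B : Set (Fin N)) ℝ (Fin r → ℝ) :=
      Module.Basis.mk hind (by rw [show Set.range ((B : Set (Fin N)).restrict A) = A '' B from Set.range_domRestrict A _, hspan])
    have := Module.finrank_eq_card_basis hbasis
    rw [Module.finrank_fin_fun] at this
    simp only [Finset.coe_sort_coe, Fintype.card_coe] at this
    omega
  have hcard : B'.card = B.card := by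
    rw [hB'def, Finset.card_insert_of_notMem hjBe, Finset.card_erase_of_mem hb]
    have : 0 < B.card := Finset.card_pos.mpr ⟨b, hb⟩
    omega
  have hind' : LinearIndependent ℝ ((B' : Set (Fin N)).restrict A) := by
    apply linearIndependent_of_top_le_span_of_card_eq_finrank
    · rw [show Set.range ((B' : Set (Fin N)).restrict A) = A '' B' from Set.range_domRestrict A _, hspan']
    · simp only [Finset.coe_sort_coe, Fintype.card_coe]
      rw [hcard, hBcard, Module.finrank_fin_fun]
  refine ⟨⟨Finset.subset_univ _, hind', hspan'⟩, ?_⟩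
  intro c hc hcint
  obtain ⟨hc1, hc2, hc3⟩ := hcint
  have key : ∃ y : Fin N,
      A y ∉ Submodule.span ℝ (A '' ((B'.erase c : Finset (Fin N)) : Set (Fin N))) ∧ c < y := by
    rcases Finset.mem_insert.mp hc with rfl | hcB'
    · -- c = j
      have herase : B'.erase c = B.erase b := Finset.erase_insert hjBe
      obtain ⟨y, hy, hby⟩ := witness_of_not_intActive hind hb (hBint b hb)
      rw [herase]
      exact ⟨y, hy, hjltb.trans hby⟩
    · obtain ⟨hcb, hcB⟩ := Finset.mem_erase.mp hcB'
      have hcj : j ≠ c := fun h => hjB (h ▸ hcB)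
      have herase : B'.erase c = insert j ((B.erase b).erase c) :=
        Finset.erase_insert_of_ne hcj
      have himg : A '' ((B'.erase c : Finset (Fin N)) : Set (Fin N))
          = insert (A j) (A '' (((B.erase b).erase c : Finset (Fin N)) : Set (Fin N))) := by
        rw [herase, Finset.coe_insert, Set.image_insert_eq]
      have hsub2 : (((B.erase b).erase c : Finset (Fin N)) : Set (Fin N))
          ⊆ ((B.erase c : Finset (Fin N)) : Set (Fin N)) :=
        Finset.coe_subset.mpr (Finset.erase_subset_erase c (Finset.erase_subset b B))
      obtain ⟨w, hw, hcw⟩ := witness_of_not_intActive hind hcB (hBint c hcB)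
      rcases (lt_or_gt_of_ne hcb) with hcltb | hbltc
      · -- c < b
        by_cases hAb : A b ∈ Submodule.span ℝ (A '' ((B'.erase c : Finset (Fin N)) : Set (Fin N)))
        · have hbnot : A b ∉ Submodule.span ℝ
              (A '' (((B.erase b).erase c : Finset (Fin N)) : Set (Fin N))) := fun h =>
            notMemSpanErase hind hb (Submodule.span_mono
              (Set.image_mono (Finset.coe_subset.mpr (Finset.erase_subset c (B.erase b)))) h)
          have hAb' : A b ∈ Submodule.span ℝ
              (insert (A j) (A '' (((B.erase b).erase c : Finset (Fin N)) : Set (Fin N)))) := by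
            rwa [himg] at hAb
          have hAj : A j ∈ Submodule.span ℝ
              (insert (A b) (A '' (((B.erase b).erase c : Finset (Fin N)) : Set (Fin N)))) :=
            mem_span_insert_exchange hAb' hbnot
          have hAjT : A j ∈ Submodule.span ℝ (A '' ((B.erase c : Finset (Fin N)) : Set (Fin N))) := by
            refine Submodule.span_le.mpr ?_ hAj
            rw [Set.insert_subset_iff]
            refine ⟨Submodule.subset_span ⟨b, Finset.mem_coe.mpr
              (Finset.mem_erase.mpr ⟨hcb.symm, hb⟩), rfl⟩, ?_⟩
            exact (Set.image_mono hsub2).trans Submodule.subset_span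
          have hle : Submodule.span ℝ (A '' ((B'.erase c : Finset (Fin N)) : Set (Fin N)))
              ≤ Submodule.span ℝ (A '' ((B.erase c : Finset (Fin N)) : Set (Fin N))) := by
            rw [himg, Submodule.span_le, Set.insert_subset_iff]
            exact ⟨hAjT, (Set.image_mono hsub2).trans Submodule.subset_span⟩
          exact ⟨w, fun hm => hw (hle hm), hcw⟩
        · exact ⟨b, hAb, hcltb⟩
      · -- b < c
        have hle : Submodule.span ℝ (A '' ((B'.erase c : Finset (Fin N)) : Set (Fin N)))
            ≤ Submodule.span ℝ (A '' ((B.erase c : Finset (Fin N)) : Set (Fin N))) := by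
          rw [himg, Submodule.span_le, Set.insert_subset_iff]
          constructor
          · refine Submodule.span_mono ?_ hj1
            rintro y ⟨e, ⟨heB, heb⟩, rfl⟩
            exact ⟨e, Finset.mem_coe.mpr
              (Finset.mem_erase.mpr ⟨(heb.trans_lt hbltc).ne, heB⟩), rfl⟩
          · exact (Set.image_mono hsub2).trans Submodule.subset_span
        exact ⟨w, fun hm => hw (hle hm), hcw⟩
  obtain ⟨y, hy, hcy⟩ := key
  exact absurd (hc3 y hy) (not_le.mpr hcy)
end
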